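/- arXiv:1201.4523 — 6 statements merged into one kernel-verified Lean document; each statement's English description precedes it below -/
import Mathlib

section
/- Let q be a prime power. The group G_O of collineations of PG(3,q²) induced by the matrices M_A = diag(A,1) with A ∈ GU₃(q) acts transitively on the set of Baer subgenerators of H(3,q²) that have a point in the Hermitian curve O: for any two Baer subgenerators b, b' each containing a point of O, there exists A ∈ GU₃(q) with M_A(b) = b'. -/
open Projectivization Module Matrix

-- incidence graph & generalised hexagon
def IncGraph {P L : Type*} (I : P → L → Prop) : SimpleGraph (P ⊕ L) :=
  SimpleGraph.fromRel (fun a b =>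
    match a, b with
    | Sum.inl p, Sum.inr l => I p l
    | _, _ => False)

/-- A point-line incidence structure is a generalised hexagon of order `(s,t)` if every line has
`s+1` points, every point is on `t+1` lines, and the bipartite incidence graph is connected with
diameter 6 and girth 12. -/
def IsGenHexagon {P L : Type*} (I : P → L → Prop) (s t : ℕ) : Prop :=
  (∀ l : L, Nat.card {p : P // I p l} = s + 1) ∧
  (∀ p : P, Nat.card {l : L // I p l} = t + 1) ∧
  (IncGraph I).Connected ∧ (IncGraph I).diam = 6 ∧ (IncGraph I).girth = 12

-- Hermitian model
abbrev PG3 (F : Type*) [Field F] := Projectivization F (Fin 4 → F)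

def herm (q : ℕ) {F : Type*} [Field F] (x y : Fin 4 → F) : F := ∑ i, x i * (y i) ^ q

def HermPts (q : ℕ) (F : Type*) [Field F] : Set (PG3 F) := {P | herm q P.rep P.rep = 0}

def OCurve (q : ℕ) (F : Type*) [Field F] : Set (PG3 F) :=
  {P | P ∈ HermPts q F ∧ P.rep 3 = 0}

def AffPts (q : ℕ) (F : Type*) [Field F] : Set (PG3 F) :=
  {P | P ∈ HermPts q F ∧ P.rep 3 ≠ 0}

def IsGenerator (q : ℕ) {F : Type*} [Field F] (W : Submodule F (Fin 4 → F)) : Prop :=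
  finrank F W = 2 ∧ ∀ x ∈ W, ∀ y ∈ W, herm q x y = 0

def IsBaerSubline (q : ℕ) {F : Type*} [Field F] (s : Set (PG3 F)) : Prop :=
  ∃ v w : Fin 4 → F, LinearIndependent F ![v, w] ∧
    s = {P | ∃ a b : F, a ^ q = a ∧ b ^ q = b ∧
          a • v + b • w ≠ 0 ∧ a • v + b • w ∈ P.submodule}

def IsBaerSubgenerator (q : ℕ) {F : Type*} [Field F] (s : Set (PG3 F)) : Prop :=
  IsBaerSubline q s ∧ ∃ W : Submodule F (Fin 4 → F), IsGenerator q W ∧ ∀ P ∈ s, P.rep ∈ W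

def IsBaerSubplane (q : ℕ) {F : Type*} [Field F] (s : Set (PG3 F)) : Prop :=
  ∃ u v w : Fin 4 → F, LinearIndependent F ![u, v, w] ∧
    s = {P | ∃ a b c : F, a ^ q = a ∧ b ^ q = b ∧ c ^ q = c ∧
          a • u + b • v + c • w ≠ 0 ∧ a • u + b • v + c • w ∈ P.submodule}

/-- `GU₃(q)`: matrices with `A ⬝ (A^(q))ᵀ = 1`. -/
def IsGU3 (q : ℕ) {F : Type*} [Field F] (A : Matrix (Fin 3) (Fin 3) F) : Prop :=
  A * (A.map (· ^ q))ᵀ = 1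

/-- The 4×4 block matrix `diag(A,1)`. -/
def MA {F : Type*} [Field F] (A : Matrix (Fin 3) (Fin 3) F) : Matrix (Fin 4) (Fin 4) F :=
  Matrix.of fun i j =>
    if hi : (i : ℕ) < 3 then
      if hj : (j : ℕ) < 3 then A ⟨i, hi⟩ ⟨j, hj⟩ else 0
    else if (j : ℕ) < 3 then 0 else 1

/-- Image of a set of points of `PG(3,q²)` under the collineation induced by an invertible
matrix `M`. -/
def matImage {F : Type*} [Field F] (M : Matrix (Fin 4) (Fin 4) F) (s : Set (PG3 F)) :
    Set (PG3 F) :=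
  {P' | ∃ P ∈ s, M.mulVec P.rep ≠ 0 ∧ M.mulVec P.rep ∈ P'.submodule}

namespace Stmt1Aux
open Polynomial

variable {q : ℕ} {F : Type} [Field F]

def baerSet (q : ℕ) {F : Type} [Field F] (v w : Fin 4 → F) : Set (PG3 F) :=
  {P | ∃ a b : F, a ^ q = a ∧ b ^ q = b ∧
        a • v + b • w ≠ 0 ∧ a • v + b • w ∈ P.submodule}

def h3 (q : ℕ) {F : Type} [Field F] (x y : Fin 3 → F) : F := ∑ i, x i * (y i) ^ q

lemma powq_neg (hq0 : q ≠ 0) (hadd : ∀ x y : F, (x + y) ^ q = x ^ q + y ^ q) (x : F) :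
    (-x) ^ q = -(x ^ q) := by
  have h := hadd x (-x)
  rw [add_neg_cancel, zero_pow hq0] at h
  exact (eq_neg_of_add_eq_zero_right h.symm)

lemma powq_sub (hq0 : q ≠ 0) (hadd : ∀ x y : F, (x + y) ^ q = x ^ q + y ^ q) (x y : F) :
    (x - y) ^ q = x ^ q - y ^ q := by
  rw [sub_eq_add_neg, hadd, powq_neg hq0 hadd, ← sub_eq_add_neg]

lemma powq_inj (hqq : ∀ x : F, (x ^ q) ^ q = x) {x y : F} (h : x ^ q = y ^ q) : x = y := by
  have := congrArg (· ^ q) h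
  simpa [hqq x, hqq y] using this

lemma basic_facts (q : ℕ) (hq : IsPrimePow q) (F : Type) [Field F] [Fintype F]
    (hF : Fintype.card F = q ^ 2) :
    (∀ x y : F, (x + y) ^ q = x ^ q + y ^ q) ∧ (∀ x : F, (x ^ q) ^ q = x) ∧ 2 ≤ q := by
  obtain ⟨p, k, hp, hk, rfl⟩ := hq
  have hp' : Nat.Prime p := Nat.prime_iff.mpr hp
  have h2 : 2 ≤ p ^ k := by
    calc 2 ≤ p := hp'.two_le
    _ = p ^ 1 := (pow_one p).symm
    _ ≤ p ^ k := Nat.pow_le_pow_right hp'.pos hk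
  refine ⟨?_, ?_, h2⟩
  · have hchar := ringChar.charP F
    obtain ⟨n, hprime, hcardn⟩ := FiniteField.card F (ringChar F)
    rw [hF] at hcardn
    have hdvd : ringChar F ∣ (p ^ k) ^ 2 := by
      rw [hcardn]
      exact dvd_pow_self _ n.ne_zero
    have hrp : ringChar F = p := by
      have h1 : ringChar F ∣ p := hprime.dvd_of_dvd_pow (hprime.dvd_of_dvd_pow hdvd)
      exact (Nat.prime_dvd_prime_iff_eq hprime hp').mp h1
    haveI : CharP F p := hrp ▸ hchar
    haveI : Fact (Nat.Prime p) := ⟨hp'⟩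
    intro x y
    exact add_pow_char_pow x y p k
  · intro x
    have h := FiniteField.pow_card x
    rw [hF] at h
    calc (x ^ (p ^ k)) ^ (p ^ k) = x ^ ((p ^ k) * (p ^ k)) := (pow_mul x _ _).symm
    _ = x ^ ((p ^ k) ^ 2) := by rw [← pow_two]
    _ = x := h

lemma trace_surj (h2 : 2 ≤ q) (hadd : ∀ x y : F, (x + y) ^ q = x ^ q + y ^ q)
    (hqq : ∀ x : F, (x ^ q) ^ q = x) [Fintype F] (hcard : Fintype.card F = q ^ 2)
    (r : F) (hr : r ^ q = r) : ∃ d : F, d + d ^ q = r := by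
  classical
  have hq0 : q ≠ 0 := by omega
  set T : F → F := fun d => d + d ^ q with hT
  have key : ∀ (c e : F), ((X : F[X]) ^ q + C c * X + C e).roots.toFinset.card ≤ q := by
    intro c e
    have hne : ((X : F[X]) ^ q + C c * X + C e) ≠ 0 := by
      intro h
      have h0 := congrArg (fun p => Polynomial.coeff p q) h
      simp [Polynomial.coeff_X_pow, Polynomial.coeff_X, Polynomial.coeff_C, Polynomial.coeff_one,
        (show q ≠ 1 by omega), (show ¬ (1 = q) by omega), hq0] at h0
    have hdeg : ((X : F[X]) ^ q + C c * X + C e).natDegree ≤ q := by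
      apply le_trans (Polynomial.natDegree_add_le _ _)
      simp only [sup_le_iff]
      constructor
      · apply le_trans (Polynomial.natDegree_add_le _ _)
        simp only [sup_le_iff, Polynomial.natDegree_X_pow, le_refl, true_and]
        calc (C c * X).natDegree ≤ (C c).natDegree + X.natDegree := Polynomial.natDegree_mul_le
        _ ≤ q := by simp only [Polynomial.natDegree_C, Polynomial.natDegree_X]; omega
      · simp only [Polynomial.natDegree_C]; omega
    calc _ ≤ Multiset.card ((X : F[X]) ^ q + C c * X + C e).roots := Multiset.toFinset_card_le _
    _ ≤ _ := le_trans (Polynomial.card_roots' _) hdeg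
  have hsub : Finset.univ.image T ⊆ Finset.univ.filter (fun x : F => x ^ q = x) := by
    intro x hx
    simp only [Finset.mem_image] at hx
    obtain ⟨d, -, rfl⟩ := hx
    simp only [Finset.mem_filter, Finset.mem_univ, true_and, hT]
    rw [hadd, hqq]
    ring
  have hKcard : (Finset.univ.filter (fun x : F => x ^ q = x)).card ≤ q := by
    refine le_trans (Finset.card_le_card (t := ((X : F[X]) ^ q + C (-1) * X + C 0).roots.toFinset) ?_) (key (-1) 0)
    intro x hx
    simp only [Finset.mem_filter, Finset.mem_univ, true_and] at hx
    rw [Multiset.mem_toFinset, Polynomial.mem_roots']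
    refine ⟨?_, ?_⟩
    · intro h
      have h0 := congrArg (fun p => Polynomial.coeff p q) h
      simp [Polynomial.coeff_X_pow, Polynomial.coeff_X, Polynomial.coeff_C, Polynomial.coeff_one,
        (show q ≠ 1 by omega), (show ¬ (1 = q) by omega), hq0] at h0
    · simp [Polynomial.IsRoot, hx]
  have hfib : ∀ a ∈ Finset.univ.image T, (Finset.univ.filter (fun d : F => T d = a)).card ≤ q := by
    intro a ha
    obtain ⟨d₀, -, hd₀⟩ := Finset.mem_image.mp ha
    refine le_trans (Finset.card_le_card_of_injOn (fun d => d - d₀)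
      (t := ((X : F[X]) ^ q + C 1 * X + C 0).roots.toFinset) ?_ ?_) (key 1 0)
    · intro d hd
      simp only [Finset.mem_coe, Finset.mem_filter, Finset.mem_univ, true_and] at hd
      rw [Finset.mem_coe, Multiset.mem_toFinset, Polynomial.mem_roots']
      refine ⟨?_, ?_⟩
      · intro h
        have h0 := congrArg (fun p => Polynomial.coeff p q) h
        simp [Polynomial.coeff_X_pow, Polynomial.coeff_X, Polynomial.coeff_C, Polynomial.coeff_one,
          (show q ≠ 1 by omega), (show ¬ (1 = q) by omega), hq0] at h0
      · simp only [Polynomial.IsRoot, Polynomial.eval_add, Polynomial.eval_pow,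
          Polynomial.eval_X, Polynomial.eval_mul, Polynomial.eval_C]
        rw [powq_sub hq0 hadd]
        have h5 : d + d ^ q = d₀ + d₀ ^ q := by
          rw [show d + d ^ q = T d from rfl, show d₀ + d₀ ^ q = T d₀ from rfl, hd, hd₀]
        linear_combination h5
    · intro a _ b _ hab
      simpa using hab
  have hbig := Finset.card_le_mul_card_image (f := T) Finset.univ q hfib
  rw [Finset.card_univ, hcard] at hbig
  have hqle : q ≤ (Finset.univ.image T).card := by
    by_contra hlt
    push_neg at hlt
    rw [pow_two] at hbig
    have h3 := Nat.mul_le_mul_left q (show (Finset.univ.image T).card + 1 ≤ q from hlt)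
    have h4 : q * ((Finset.univ.image T).card + 1) = q * (Finset.univ.image T).card + q := by ring
    omega
  have heq : Finset.univ.image T = Finset.univ.filter (fun x : F => x ^ q = x) :=
    Finset.eq_of_subset_of_card_le hsub (le_trans hKcard hqle)
  have : r ∈ Finset.univ.image T := by
    rw [heq]
    simp [hr]
  obtain ⟨d, -, hd⟩ := Finset.mem_image.mp this
  exact ⟨d, hd⟩


def hform (q : ℕ) {F : Type} [Field F] (x : Fin 3 → F) : (Fin 3 → F) →ₗ[F] F where
  toFun z := ∑ i, z i * (x i) ^ q
  map_add' a b := by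
    simp only [Pi.add_apply, add_mul]
    rw [Finset.sum_add_distrib]
  map_smul' c a := by
    simp only [Pi.smul_apply, smul_eq_mul, RingHom.id_apply, Finset.mul_sum, mul_assoc]

lemma hform_single (hq0 : q ≠ 0) (x : Fin 3 → F) (i : Fin 3) (c : F) :
    hform q x (Pi.single i c) = c * (x i) ^ q := by
  show (∑ j, (Pi.single i c : Fin 3 → F) j * (x j) ^ q) = c * (x i) ^ q
  rw [Finset.sum_eq_single i]
  · simp
  · intro j _ hj
    simp [Pi.single_eq_of_ne hj]
  · simp

lemma ker_hform (hq0 : q ≠ 0) (x : Fin 3 → F) (hx : x ≠ 0) :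
    Module.finrank F (LinearMap.ker (hform q x)) = 2 := by
  obtain ⟨i, hi⟩ := Function.ne_iff.mp hx
  have hi' : x i ≠ 0 := by simpa using hi
  have hsurj : Function.Surjective (hform q x) := by
    intro c
    refine ⟨Pi.single i (c / (x i) ^ q), ?_⟩
    rw [hform_single hq0]
    field_simp
  have hrange : LinearMap.range (hform q x) = ⊤ := LinearMap.range_eq_top.mpr hsurj
  have hrn := LinearMap.finrank_range_add_finrank_ker (hform q x)
  rw [hrange, finrank_top, Module.finrank_self, Module.finrank_fin_fun] at hrn
  omega

lemma no_ti (h2 : 2 ≤ q) (hadd : ∀ x y : F, (x + y) ^ q = x ^ q + y ^ q)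
    (hqq : ∀ x : F, (x ^ q) ^ q = x) (x y : Fin 3 → F)
    (hxy : LinearIndependent F ![x, y])
    (hxx : h3 q x x = 0) (hxy0 : h3 q x y = 0) (hyx : h3 q y x = 0) (hyy : h3 q y y = 0) :
    False := by
  have hq0 : q ≠ 0 := by omega
  have hx0 : x ≠ 0 := by simpa using hxy.ne_zero 0
  have hy0 : y ≠ 0 := by simpa using hxy.ne_zero 1
  have hlxx : hform q x x = 0 := hxx
  have hlxy : hform q x y = 0 := hyx
  have hlyx : hform q y x = 0 := hxy0
  have hlyy : hform q y y = 0 := hyy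
  have hspan2 : Module.finrank F (Submodule.span F (Set.range ![x, y])) = 2 := by
    rw [finrank_span_eq_card hxy]
    simp
  have hspan_ker : ∀ z : Fin 3 → F, z ≠ 0 → hform q z x = 0 → hform q z y = 0 →
      Submodule.span F (Set.range ![x, y]) = LinearMap.ker (hform q z) := by
    intro z hz hzx hzy
    apply Submodule.eq_of_le_of_finrank_le
    · rw [Submodule.span_le]
      rintro v ⟨j, rfl⟩
      fin_cases j
      · simpa [LinearMap.mem_ker] using hzx
      · simpa [LinearMap.mem_ker] using hzy
    · rw [ker_hform hq0 z hz, hspan2]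
  have hkx := hspan_ker x hx0 hlxx hlxy
  have hky := hspan_ker y hy0 hlyx hlyy
  have hne_top : Submodule.span F (Set.range ![x, y]) ≠ ⊤ := by
    intro h
    rw [h, finrank_top, Module.finrank_fin_fun] at hspan2
    omega
  obtain ⟨z, hz⟩ : ∃ z, z ∉ Submodule.span F (Set.range ![x, y]) := by
    by_contra h
    push_neg at h
    exact hne_top (Submodule.eq_top_iff'.mpr h)
  have hlxz : hform q x z ≠ 0 := by
    intro h
    exact hz (hkx ▸ LinearMap.mem_ker.mpr h)
  set c := hform q y z / hform q x z with hc
  set g : (Fin 3 → F) →ₗ[F] F := hform q y - c • hform q x with hg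
  have hgx : g x = 0 := by simp [hg, hlxx, hlyx]
  have hgy : g y = 0 := by simp [hg, hlyy, hlxy]
  have hgz : g z = 0 := by
    simp only [hg, LinearMap.sub_apply, LinearMap.smul_apply, smul_eq_mul, hc]
    field_simp
    simp
  have hker : g = 0 := by
    rw [← LinearMap.ker_eq_top]
    have hle : Submodule.span F (Set.range ![x, y]) ≤ LinearMap.ker g := by
      rw [Submodule.span_le]
      rintro v ⟨j, rfl⟩
      fin_cases j
      · simpa [LinearMap.mem_ker] using hgx
      · simpa [LinearMap.mem_ker] using hgy
    have hle2 : Submodule.span F (Set.range ![x, y]) ⊔ Submodule.span F {z} ≤ LinearMap.ker g :=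
      sup_le hle ((Submodule.span_singleton_le_iff_mem _ _).mpr (LinearMap.mem_ker.mpr hgz))
    have hlt : Submodule.span F (Set.range ![x, y]) <
        Submodule.span F (Set.range ![x, y]) ⊔ Submodule.span F {z} := by
      refine lt_of_le_of_ne le_sup_left ?_
      intro h
      apply hz
      rw [h]
      exact Submodule.mem_sup_right (Submodule.mem_span_singleton_self z)
    have h1 := Submodule.finrank_lt_finrank_of_lt hlt
    rw [hspan2] at h1
    have h2' := Submodule.finrank_mono hle2
    have h3' := Submodule.finrank_le (LinearMap.ker g)
    rw [Module.finrank_fin_fun] at h3'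
    apply Submodule.eq_top_of_finrank_eq
    rw [Module.finrank_fin_fun]
    omega
  have key : ∀ j : Fin 3, (y j) ^ q = c * (x j) ^ q := by
    intro j
    have h := congrArg (fun f : (Fin 3 → F) →ₗ[F] F => f (Pi.single j 1)) hker
    simp only [hg, LinearMap.sub_apply, LinearMap.smul_apply, smul_eq_mul,
      LinearMap.zero_apply] at h
    rw [hform_single hq0, hform_single hq0] at h
    simp only [one_mul] at h
    linear_combination h
  have hyc : y = (c ^ q) • x := by
    funext j
    have h := key j
    have h2' : (y j) ^ q = (c ^ q * x j) ^ q := by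
      rw [mul_pow, hqq]
      exact h
    simpa using powq_inj hqq h2'
  obtain ⟨-, ht⟩ := LinearIndependent.pair_iff.mp hxy (c ^ q) (-1)
    (by rw [hyc]; module)
  simp at ht


lemma herm_eq (q : ℕ) (x y : Fin 4 → F) :
    herm q x y = h3 q ![x 0, x 1, x 2] ![y 0, y 1, y 2] + x 3 * (y 3) ^ q := by
  simp [herm, h3, Fin.sum_univ_four, Fin.sum_univ_three]

lemma combo_ne {v w : Fin 4 → F} (hv : v ≠ 0) (hv3 : v 3 = 0) (hw3 : w 3 = 1) (α β : F)
    (hab : ¬(α = 0 ∧ β = 0)) : α • v + β • w ≠ 0 := by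
  intro h
  have h3' := congrFun h 3
  simp only [Pi.add_apply, Pi.smul_apply, smul_eq_mul, hv3, hw3, mul_zero, mul_one,
    zero_add, Pi.zero_apply] at h3'
  rw [h3'] at h
  simp only [zero_smul, add_zero] at h
  rcases smul_eq_zero.mp h with h' | h'
  · exact hab ⟨h', h3'⟩
  · exact hv h'

lemma baerSet_smul {μ : F} (hμ : μ ≠ 0) (v w : Fin 4 → F) :
    baerSet q (μ • v) (μ • w) = baerSet q v w := by
  ext P
  constructor
  · rintro ⟨α, β, hα, hβ, hne, hmem⟩
    have he : α • (μ • v) + β • (μ • w) = μ • (α • v + β • w) := by module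
    rw [he] at hne hmem
    exact ⟨α, β, hα, hβ, fun h => hne (by rw [h, smul_zero]),
      (Submodule.smul_mem_iff _ hμ).mp hmem⟩
  · rintro ⟨α, β, hα, hβ, hne, hmem⟩
    refine ⟨α, β, hα, hβ, ?_, ?_⟩
    · rw [show α • (μ • v) + β • (μ • w) = μ • (α • v + β • w) by module]
      exact smul_ne_zero hμ hne
    · rw [show α • (μ • v) + β • (μ • w) = μ • (α • v + β • w) by module]
      exact Submodule.smul_mem _ μ hmem

lemma baerSet_change (hq0 : q ≠ 0) (hadd : ∀ x y : F, (x + y) ^ q = x ^ q + y ^ q)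
    (v₀ w₀ : Fin 4 → F) (a c a' c' : F)
    (ha : a ^ q = a) (hc : c ^ q = c) (ha' : a' ^ q = a') (hc' : c' ^ q = c')
    (hdet : a * c' - c * a' ≠ 0) :
    baerSet q (a • v₀ + c • w₀) (a' • v₀ + c' • w₀) = baerSet q v₀ w₀ := by
  ext P
  constructor
  · rintro ⟨α, β, hα, hβ, hne, hmem⟩
    have he : α • (a • v₀ + c • w₀) + β • (a' • v₀ + c' • w₀)
        = (α * a + β * a') • v₀ + (α * c + β * c') • w₀ := by module
    rw [he] at hne hmem
    refine ⟨α * a + β * a', α * c + β * c', ?_, ?_, hne, hmem⟩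
    · rw [hadd, mul_pow, mul_pow, hα, hβ, ha, ha']
    · rw [hadd, mul_pow, mul_pow, hα, hβ, hc, hc']
  · rintro ⟨γ, δ, hγ, hδ, hne, hmem⟩
    have hD : (a * c' - c * a') ^ q = a * c' - c * a' := by
      rw [powq_sub hq0 hadd, mul_pow, mul_pow, ha, hc, ha', hc']
    refine ⟨(γ * c' - δ * a') / (a * c' - c * a'), (δ * a - γ * c) / (a * c' - c * a'),
      ?_, ?_, ?_, ?_⟩
    · rw [div_pow, powq_sub hq0 hadd, mul_pow, mul_pow, hγ, hδ, ha', hc', hD]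
    · rw [div_pow, powq_sub hq0 hadd, mul_pow, mul_pow, hγ, hδ, ha, hc, hD]
    all_goals {
      have h1 : (γ * c' - δ * a') / (a * c' - c * a') * a
          + (δ * a - γ * c) / (a * c' - c * a') * a' = γ := by
        rw [div_mul_eq_mul_div, div_mul_eq_mul_div, ← add_div, div_eq_iff hdet]
        ring
      have h2 : (γ * c' - δ * a') / (a * c' - c * a') * c
          + (δ * a - γ * c) / (a * c' - c * a') * c' = δ := by
        rw [div_mul_eq_mul_div, div_mul_eq_mul_div, ← add_div, div_eq_iff hdet]
        ring
      have he : ((γ * c' - δ * a') / (a * c' - c * a')) • (a • v₀ + c • w₀)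
          + ((δ * a - γ * c) / (a * c' - c * a')) • (a' • v₀ + c' • w₀)
          = ((γ * c' - δ * a') / (a * c' - c * a') * a
              + (δ * a - γ * c) / (a * c' - c * a') * a') • v₀
            + ((γ * c' - δ * a') / (a * c' - c * a') * c
              + (δ * a - γ * c) / (a * c' - c * a') * c') • w₀ := by module
      rw [he, h1, h2]
      first
      | exact hne
      | exact hmem }


lemma matImage_baerSet (M : Matrix (Fin 4) (Fin 4) F) (v w v' w' : Fin 4 → F)
    (hMv : M *ᵥ v = v') (hMw : M *ᵥ w = w')
    (hv : v ≠ 0) (hv3 : v 3 = 0) (hw3 : w 3 = 1)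
    (hv' : v' ≠ 0) (hv3' : v' 3 = 0) (hw3' : w' 3 = 1) :
    matImage M (baerSet q v w) = baerSet q v' w' := by
  ext P'
  constructor
  · rintro ⟨P, ⟨α, β, hα, hβ, hne, hmem⟩, hMne, hMmem⟩
    rw [Projectivization.submodule_eq, Submodule.mem_span_singleton] at hmem
    obtain ⟨t, ht⟩ := hmem
    refine ⟨α, β, hα, hβ, ?_, ?_⟩
    · apply combo_ne hv' hv3' hw3'
      rintro ⟨rfl, rfl⟩
      simp at hne
    · have hkey : α • v' + β • w' = t • (M *ᵥ P.rep) := by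
        rw [← hMv, ← hMw, ← Matrix.mulVec_smul (b := α), ← Matrix.mulVec_smul (b := β),
          ← Matrix.mulVec_add, ← ht, Matrix.mulVec_smul]
      rw [hkey]
      exact Submodule.smul_mem _ t hMmem
  · rintro ⟨α, β, hα, hβ, hne, hmem⟩
    have hab : ¬(α = 0 ∧ β = 0) := by
      rintro ⟨rfl, rfl⟩
      simp at hne
    have hx : α • v + β • w ≠ 0 := combo_ne hv hv3 hw3 α β hab
    obtain ⟨u, hu⟩ := (Projectivization.mk_eq_mk_iff F _ _
      (Projectivization.rep_nonzero _) hx).mp (Projectivization.mk_rep _)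
    have hMrep : M *ᵥ (Projectivization.mk F (α • v + β • w) hx).rep
        = (u : F) • (α • v' + β • w') := by
      rw [← hu, Units.smul_def, Matrix.mulVec_smul, Matrix.mulVec_add,
        Matrix.mulVec_smul, Matrix.mulVec_smul, hMv, hMw]
    refine ⟨Projectivization.mk F (α • v + β • w) hx, ⟨α, β, hα, hβ, hx, ?_⟩, ?_, ?_⟩
    · rw [Projectivization.submodule_mk]
      exact Submodule.mem_span_singleton_self _
    · rw [hMrep]
      exact smul_ne_zero u.ne_zero hne
    · rw [hMrep]
      exact Submodule.smul_mem _ _ hmem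


lemma extract (h2 : 2 ≤ q) (hadd : ∀ x y : F, (x + y) ^ q = x ^ q + y ^ q)
    (hqq : ∀ x : F, (x ^ q) ^ q = x)
    (b : Set (PG3 F)) (hb : IsBaerSubgenerator q b) (hbO : ∃ P ∈ b, P ∈ OCurve q F) :
    ∃ v w : Fin 4 → F, v ≠ 0 ∧ v 3 = 0 ∧ w 3 = 1 ∧
      herm q v v = 0 ∧ herm q v w = 0 ∧ herm q w v = 0 ∧ herm q w w = 0 ∧
      b = baerSet q v w := by
  have hq0 : q ≠ 0 := by omega
  obtain ⟨⟨v₀, w₀, hind, hbeq⟩, W, ⟨hWrank, hWiso⟩, hbW⟩ := hb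
  have hbeq' : b = baerSet q v₀ w₀ := hbeq
  have hv₀0 : v₀ ≠ 0 := by simpa using hind.ne_zero 0
  have hw₀0 : w₀ ≠ 0 := by simpa using hind.ne_zero 1
  -- v₀ and w₀ lie in W
  have hmemW : ∀ (x : Fin 4 → F) (hx : x ≠ 0),
      Projectivization.mk F x hx ∈ b → x ∈ W := by
    intro x hx hmem
    have hrep := hbW _ hmem
    obtain ⟨u, hu⟩ := (Projectivization.mk_eq_mk_iff F _ _
      (Projectivization.rep_nonzero _) hx).mp (Projectivization.mk_rep _)
    rw [← hu, Units.smul_def] at hrep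
    have := Submodule.smul_mem W ((u : F)⁻¹) hrep
    rwa [smul_smul, inv_mul_cancel₀ u.ne_zero, one_smul] at this
  have hv₀W : v₀ ∈ W := by
    apply hmemW v₀ hv₀0
    rw [hbeq']
    refine ⟨1, 0, one_pow q, zero_pow hq0, by simpa using hv₀0, ?_⟩
    rw [Projectivization.submodule_mk]
    simpa using Submodule.mem_span_singleton_self v₀
  have hw₀W : w₀ ∈ W := by
    apply hmemW w₀ hw₀0
    rw [hbeq']
    refine ⟨0, 1, zero_pow hq0, one_pow q, by simpa using hw₀0, ?_⟩
    rw [Projectivization.submodule_mk]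
    simpa using Submodule.mem_span_singleton_self w₀
  -- the point of O on b
  obtain ⟨P, hPb, hPO⟩ := hbO
  rw [hbeq'] at hPb
  obtain ⟨a, c, ha, hc, hne, hmem⟩ := hPb
  set v : Fin 4 → F := a • v₀ + c • w₀ with hvdef
  have hvW : v ∈ W := Submodule.add_mem W (Submodule.smul_mem W a hv₀W)
    (Submodule.smul_mem W c hw₀W)
  have hv3 : v 3 = 0 := by
    rw [Projectivization.submodule_eq, Submodule.mem_span_singleton] at hmem
    obtain ⟨t, ht⟩ := hmem
    rw [← ht]
    simp [hPO.2]
  -- choose the complementary pair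
  obtain ⟨a', c', ha', hc', hdet⟩ : ∃ a' c' : F, a' ^ q = a' ∧ c' ^ q = c' ∧
      a * c' - c * a' ≠ 0 := by
    by_cases haz : a = 0
    · refine ⟨1, 0, one_pow q, zero_pow hq0, ?_⟩
      have hcz : c ≠ 0 := by
        intro h
        apply hne
        rw [hvdef, haz, h]
        simp
      simpa [haz] using hcz
    · exact ⟨0, 1, zero_pow hq0, one_pow q, by simpa using haz⟩
  set w₁ : Fin 4 → F := a' • v₀ + c' • w₀ with hw₁def
  have hw₁W : w₁ ∈ W := Submodule.add_mem W (Submodule.smul_mem W a' hv₀W)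
    (Submodule.smul_mem W c' hw₀W)
  have hchg : baerSet q v w₁ = baerSet q v₀ w₀ :=
    baerSet_change hq0 hadd v₀ w₀ a c a' c' ha hc ha' hc' hdet
  -- independence of v and w₁
  have hindvw : LinearIndependent F ![v, w₁] := by
    rw [LinearIndependent.pair_iff]
    intro s t hst
    have h0 : (s * a + t * a') • v₀ + (s * c + t * c') • w₀ = 0 := by
      rw [← hst, hvdef, hw₁def]
      module
    obtain ⟨e1, e2⟩ := LinearIndependent.pair_iff.mp hind _ _ h0
    have hs : s * (a * c' - c * a') = 0 := by linear_combination c' * e1 - a' * e2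
    have ht : t * (a * c' - c * a') = 0 := by linear_combination a * e2 - c * e1
    constructor
    · rcases mul_eq_zero.mp hs with h | h
      · exact h
      · exact absurd h hdet
    · rcases mul_eq_zero.mp ht with h | h
      · exact h
      · exact absurd h hdet
  -- the second vector has nonzero last coordinate
  have hw₁3 : w₁ 3 ≠ 0 := by
    intro hw13
    -- truncations give a totally isotropic pair in the plane
    set x : Fin 3 → F := ![v 0, v 1, v 2] with hxdef
    set y : Fin 3 → F := ![w₁ 0, w₁ 1, w₁ 2] with hydef
    have hvv := hWiso v hvW v hvW
    have hvw := hWiso v hvW w₁ hw₁W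
    have hwv := hWiso w₁ hw₁W v hvW
    have hww := hWiso w₁ hw₁W w₁ hw₁W
    rw [herm_eq, hv3] at hvv hvw
    rw [herm_eq, hw13] at hwv hww
    simp only [zero_mul, add_zero, zero_pow hq0, mul_zero] at hvv hvw hwv hww
    have hindxy : LinearIndependent F ![x, y] := by
      rw [LinearIndependent.pair_iff]
      intro s t hst
      apply LinearIndependent.pair_iff.mp hindvw s t
      funext i
      fin_cases i
      · exact congrFun hst 0
      · exact congrFun hst 1
      · exact congrFun hst 2
      · simp [hv3, hw13]
    exact no_ti h2 hadd hqq x y hindxy hvv hvw hwv hww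
  -- rescale
  refine ⟨(w₁ 3)⁻¹ • v, (w₁ 3)⁻¹ • w₁, ?_, ?_, ?_, ?_, ?_, ?_, ?_, ?_⟩
  · exact smul_ne_zero (inv_ne_zero hw₁3) hne
  · simp [hv3]
  · simp [inv_mul_cancel₀ hw₁3]
  · exact hWiso _ (Submodule.smul_mem W _ hvW) _ (Submodule.smul_mem W _ hvW)
  · exact hWiso _ (Submodule.smul_mem W _ hvW) _ (Submodule.smul_mem W _ hw₁W)
  · exact hWiso _ (Submodule.smul_mem W _ hw₁W) _ (Submodule.smul_mem W _ hvW)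
  · exact hWiso _ (Submodule.smul_mem W _ hw₁W) _ (Submodule.smul_mem W _ hw₁W)
  · rw [hbeq', ← hchg, baerSet_smul (inv_ne_zero hw₁3)]


lemma h3_add_left (x y z : Fin 3 → F) : h3 q (x + y) z = h3 q x z + h3 q y z := by
  simp only [h3, Pi.add_apply, add_mul]
  rw [Finset.sum_add_distrib]

lemma h3_smul_left (c : F) (x z : Fin 3 → F) : h3 q (c • x) z = c * h3 q x z := by
  simp only [h3, Pi.smul_apply, smul_eq_mul, Finset.mul_sum, mul_assoc]

lemma h3_add_right (hadd : ∀ x y : F, (x + y) ^ q = x ^ q + y ^ q) (x y z : Fin 3 → F) :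
    h3 q x (y + z) = h3 q x y + h3 q x z := by
  simp only [h3, Pi.add_apply, hadd, mul_add]
  rw [Finset.sum_add_distrib]

lemma h3_smul_right (c : F) (x y : Fin 3 → F) : h3 q x (c • y) = c ^ q * h3 q x y := by
  simp only [h3, Pi.smul_apply, smul_eq_mul, mul_pow, Finset.mul_sum]
  congr 1
  funext i
  ring

lemma h3_conj (hadd : ∀ x y : F, (x + y) ^ q = x ^ q + y ^ q)
    (hqq : ∀ x : F, (x ^ q) ^ q = x) (x y : Fin 3 → F) :
    (h3 q x y) ^ q = h3 q y x := by
  simp only [h3, Fin.sum_univ_three]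
  rw [hadd, hadd, mul_pow, mul_pow, mul_pow, hqq, hqq, hqq]
  ring

lemma h3_single_right (hq0 : q ≠ 0) (x : Fin 3 → F) (i : Fin 3) (c : F) :
    h3 q x (Pi.single i c) = x i * c ^ q := by
  rw [h3, Finset.sum_eq_single i]
  · simp
  · intro j _ hj
    simp [Pi.single_eq_of_ne hj, zero_pow hq0]
  · simp

/-- the canonical Gram matrix -/
def G (F : Type) [Field F] : Matrix (Fin 3) (Fin 3) F := !![0,0,1;0,-1,0;1,0,0]

lemma build_u (h2 : 2 ≤ q) (hadd : ∀ x y : F, (x + y) ^ q = x ^ q + y ^ q)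
    (hqq : ∀ x : F, (x ^ q) ^ q = x) (htr : ∀ r : F, r ^ q = r → ∃ d : F, d + d ^ q = r)
    (p w : Fin 3 → F) (hp : p ≠ 0)
    (hpp : h3 q p p = 0) (hpw : h3 q p w = 0) (hwp : h3 q w p = 0) (hww : h3 q w w = -1) :
    ∃ u : Fin 3 → F, h3 q p u = 1 ∧ h3 q u p = 1 ∧ h3 q w u = 0 ∧ h3 q u w = 0 ∧
      h3 q u u = 0 := by
  have hq0 : q ≠ 0 := by omega
  obtain ⟨i, hi⟩ := Function.ne_iff.mp hp
  have hi' : p i ≠ 0 := by simpa using hi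
  set u₀ : Fin 3 → F := Pi.single i ((p i)⁻¹ ^ q) with hu₀
  have hpu₀ : h3 q p u₀ = 1 := by
    rw [hu₀, h3_single_right hq0, hqq]
    exact mul_inv_cancel₀ hi'
  set e : F := h3 q w u₀ with he
  set u₁ : Fin 3 → F := u₀ + e ^ q • w with hu₁
  have hpu₁ : h3 q p u₁ = 1 := by
    rw [hu₁, h3_add_right hadd, h3_smul_right, hpu₀, hqq, hpw, mul_zero, add_zero]
  have hwu₁ : h3 q w u₁ = 0 := by
    rw [hu₁, h3_add_right hadd, h3_smul_right, ← he, hqq, hww]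
    ring
  have hu₁p : h3 q u₁ p = 1 := by
    rw [← h3_conj hadd hqq, hpu₁, one_pow]
  clear_value u₀ e u₁
  have hfix : (-(h3 q u₁ u₁)) ^ q = -(h3 q u₁ u₁) := by
    rw [powq_neg hq0 hadd]
    congr 1
    conv_rhs => rw [← hqq (h3 q u₁ u₁)]
    rw [h3_conj hadd hqq, h3_conj hadd hqq]
  obtain ⟨d, hd⟩ := htr _ hfix
  set u : Fin 3 → F := u₁ + d • p with hudef
  clear_value u
  have hpu : h3 q p u = 1 := by
    rw [hudef, h3_add_right hadd, h3_smul_right, hpu₁, hpp, mul_zero, add_zero]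
  have hwu : h3 q w u = 0 := by
    rw [hudef, h3_add_right hadd, h3_smul_right, hwu₁, hwp, mul_zero, add_zero]
  have hup : h3 q u p = 1 := by
    rw [← h3_conj hadd hqq, hpu, one_pow]
  have huw : h3 q u w = 0 := by
    rw [← h3_conj hadd hqq, hwu, zero_pow hq0]
  have huu : h3 q u u = 0 := by
    have hexp : h3 q u u = h3 q u₁ u₁ + d ^ q * h3 q u₁ p
        + d * (h3 q p u₁ + d ^ q * h3 q p p) := by
      conv_lhs => rw [hudef]
      rw [h3_add_left, h3_smul_left, h3_add_right hadd, h3_smul_right,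
        h3_add_right hadd, h3_smul_right]
    rw [hexp, hu₁p, hpu₁, hpp]
    linear_combination hd
  exact ⟨u, hpu, hup, hwu, huw, huu⟩


lemma map_mul_pow (hadd : ∀ x y : F, (x + y) ^ q = x ^ q + y ^ q)
    (M N : Matrix (Fin 3) (Fin 3) F) :
    (M * N).map (· ^ q) = M.map (· ^ q) * N.map (· ^ q) := by
  ext i j
  simp [Matrix.map_apply, Matrix.mul_apply, Fin.sum_univ_three, hadd, mul_pow]

lemma map_map_pow (hqq : ∀ x : F, (x ^ q) ^ q = x) (M : Matrix (Fin 3) (Fin 3) F) :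
    (M.map (· ^ q)).map (· ^ q) = M := by
  ext i j
  simp [Matrix.map_apply, hqq]

lemma G_mul_G : (G F) * (G F) = 1 := by
  ext i j
  fin_cases i <;> fin_cases j <;>
    simp [G, Matrix.mul_apply, Fin.sum_univ_three, Matrix.one_apply, Matrix.vecHead,
      Matrix.vecTail, Function.comp]

lemma G_transpose : (G F)ᵀ = G F := by
  ext i j
  fin_cases i <;> fin_cases j <;> rfl

lemma G_map (hq0 : q ≠ 0) (hadd : ∀ x y : F, (x + y) ^ q = x ^ q + y ^ q) :
    (G F).map (· ^ q) = G F := by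
  have hneg1 : (-1 : F) ^ q = -1 := by
    rw [powq_neg hq0 hadd, one_pow]
  ext i j
  fin_cases i <;> fin_cases j <;>
    first
      | rfl
      | (show (0 : F) ^ q = 0; exact zero_pow hq0)
      | (show (1 : F) ^ q = 1; exact one_pow q)
      | (show (-1 : F) ^ q = -1; exact hneg1)

lemma gu_of_gram (hq0 : q ≠ 0) (hadd : ∀ x y : F, (x + y) ^ q = x ^ q + y ^ q)
    (hqq : ∀ x : F, (x ^ q) ^ q = x) (B B' : Matrix (Fin 3) (Fin 3) F)
    (hB : Bᵀ * B.map (· ^ q) = G F) (hB' : B'ᵀ * B'.map (· ^ q) = G F) :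
    IsGU3 q (B' * (G F * (B.map (· ^ q))ᵀ)) ∧ (B' * (G F * (B.map (· ^ q))ᵀ)) * B = B' := by
  have hBG : (B.map (· ^ q))ᵀ * B = G F := by
    have h := congrArg Matrix.transpose hB
    rwa [Matrix.transpose_mul, Matrix.transpose_transpose, G_transpose] at h
  have hB'G : (B'.map (· ^ q))ᵀ * B' = G F := by
    have h := congrArg Matrix.transpose hB'
    rwa [Matrix.transpose_mul, Matrix.transpose_transpose, G_transpose] at h
  have hLB : (G F * (B.map (· ^ q))ᵀ) * B = 1 := by
    rw [Matrix.mul_assoc, hBG, G_mul_G]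
  have hL'B' : (G F * (B'.map (· ^ q))ᵀ) * B' = 1 := by
    rw [Matrix.mul_assoc, hB'G, G_mul_G]
  have hB'L' : B' * (G F * (B'.map (· ^ q))ᵀ) = 1 := mul_eq_one_comm.mp hL'B'
  constructor
  · show (B' * (G F * (B.map (· ^ q))ᵀ)) * ((B' * (G F * (B.map (· ^ q))ᵀ)).map (· ^ q))ᵀ = 1
    have hmap : (B' * (G F * (B.map (· ^ q))ᵀ)).map (· ^ q)
        = B'.map (· ^ q) * (G F * Bᵀ) := by
      rw [map_mul_pow hadd, map_mul_pow hadd, G_map hq0 hadd, ← Matrix.transpose_map,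
        map_map_pow hqq]
    rw [hmap, Matrix.transpose_mul, Matrix.transpose_mul, Matrix.transpose_transpose,
      G_transpose]
    calc (B' * (G F * (B.map (· ^ q))ᵀ)) * (B * G F * (B'.map (· ^ q))ᵀ)
        = B' * (((G F * (B.map (· ^ q))ᵀ) * B) * (G F * (B'.map (· ^ q))ᵀ)) := by
          simp only [Matrix.mul_assoc]
      _ = B' * (G F * (B'.map (· ^ q))ᵀ) := by rw [hLB, Matrix.one_mul]
      _ = 1 := hB'L'
  · rw [Matrix.mul_assoc, hLB, Matrix.mul_one]


lemma finval2 : ((2 : Fin 4) : ℕ) = 2 := rfl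
lemma finval3 : ((3 : Fin 4) : ℕ) = 3 := rfl
lemma finmk2 (h : (2:ℕ) < 3) : (⟨2, h⟩ : Fin 3) = 2 := rfl
lemma finmk42 (h : (2:ℕ) < 4) : (⟨2, h⟩ : Fin 4) = 2 := rfl
lemma finmk43 (h : (3:ℕ) < 4) : (⟨3, h⟩ : Fin 4) = 3 := rfl

lemma MA_lift (A : Matrix (Fin 3) (Fin 3) F) (x x' : Fin 4 → F) (h33 : x 3 = x' 3)
    (hA : A *ᵥ ![x 0, x 1, x 2] = ![x' 0, x' 1, x' 2]) : (MA A) *ᵥ x = x' := by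
  have h0 := congrFun hA 0
  have h1 := congrFun hA 1
  have h2 := congrFun hA 2
  simp [Matrix.mulVec, dotProduct, Fin.sum_univ_three, Matrix.vecHead, Matrix.vecTail,
    Function.comp, Matrix.cons_val_succ] at h0 h1 h2
  funext i
  fin_cases i <;>
    simp [Matrix.mulVec, dotProduct, Fin.sum_univ_four, MA, finval2, finval3, finmk2,
      finmk42, finmk43, Matrix.vecHead, Matrix.vecTail, Function.comp, Matrix.cons_val_succ]
  · exact h0
  · exact h1
  · exact h2
  · exact h33

lemma gram_basis (h2 : 2 ≤ q) (hadd : ∀ x y : F, (x + y) ^ q = x ^ q + y ^ q)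
    (hqq : ∀ x : F, (x ^ q) ^ q = x) (htr : ∀ r : F, r ^ q = r → ∃ d : F, d + d ^ q = r)
    (v w : Fin 4 → F) (hv : v ≠ 0) (hv3 : v 3 = 0) (hw3 : w 3 = 1)
    (hvv : herm q v v = 0) (hvw : herm q v w = 0) (hwv : herm q w v = 0)
    (hww : herm q w w = 0) :
    ∃ B : Matrix (Fin 3) (Fin 3) F, Bᵀ * B.map (· ^ q) = G F ∧
      B *ᵥ Pi.single 0 1 = ![v 0, v 1, v 2] ∧ B *ᵥ Pi.single 1 1 = ![w 0, w 1, w 2] := by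
  have hq0 : q ≠ 0 := by omega
  rw [herm_eq, hv3] at hvv hvw
  rw [herm_eq, hw3] at hwv hww
  rw [hv3] at hwv
  simp only [zero_mul, add_zero, zero_pow hq0, mul_zero, one_mul, one_pow] at hvv hvw hwv hww
  have hww' : h3 q ![w 0, w 1, w 2] ![w 0, w 1, w 2] = -1 := by linear_combination hww
  have hp0 : (![v 0, v 1, v 2] : Fin 3 → F) ≠ 0 := by
    intro h
    apply hv
    funext j
    fin_cases j
    · exact congrFun h 0
    · exact congrFun h 1
    · exact congrFun h 2
    · exact hv3
  obtain ⟨u, hpu, hup, hwu, huw, huu⟩ :=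
    build_u h2 hadd hqq htr ![v 0, v 1, v 2] ![w 0, w 1, w 2] hp0 hvv hvw hwv hww'
  refine ⟨Matrix.of fun i j => ![![v 0, v 1, v 2], ![w 0, w 1, w 2], u] j i, ?_, ?_, ?_⟩
  · have hent : ∀ i j : Fin 3,
        ((Matrix.of fun i j => ![![v 0, v 1, v 2], ![w 0, w 1, w 2], u] j i)ᵀ
          * (Matrix.of fun i j => ![![v 0, v 1, v 2], ![w 0, w 1, w 2], u] j i).map (· ^ q)) i j
        = h3 q (![![v 0, v 1, v 2], ![w 0, w 1, w 2], u] i)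
            (![![v 0, v 1, v 2], ![w 0, w 1, w 2], u] j) := by
      intro i j
      simp [Matrix.mul_apply, h3]
    ext i j
    rw [hent]
    fin_cases i <;> fin_cases j <;>
      simp [G, Matrix.vecHead, Matrix.vecTail, Function.comp, Matrix.cons_val_succ] <;>
      first
        | exact hvv
        | exact hvw
        | exact hpu
        | exact hwv
        | exact hww'
        | exact hwu
        | exact hup
        | exact huw
        | exact huu
        | (rw [hww']; norm_num)
  · rw [Matrix.mulVec_single_one]
    ext i
    rfl
  · rw [Matrix.mulVec_single_one]
    ext i
    rfl

lemma construct (h2 : 2 ≤ q) (hadd : ∀ x y : F, (x + y) ^ q = x ^ q + y ^ q)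
    (hqq : ∀ x : F, (x ^ q) ^ q = x) (htr : ∀ r : F, r ^ q = r → ∃ d : F, d + d ^ q = r)
    (v w v' w' : Fin 4 → F)
    (hv : v ≠ 0) (hv3 : v 3 = 0) (hw3 : w 3 = 1)
    (hvv : herm q v v = 0) (hvw : herm q v w = 0) (hwv : herm q w v = 0)
    (hww : herm q w w = 0)
    (hv' : v' ≠ 0) (hv3' : v' 3 = 0) (hw3' : w' 3 = 1)
    (hvv' : herm q v' v' = 0) (hvw' : herm q v' w' = 0) (hwv' : herm q w' v' = 0)
    (hww' : herm q w' w' = 0) :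
    ∃ A : Matrix (Fin 3) (Fin 3) F, IsGU3 q A ∧
      (MA A) *ᵥ v = v' ∧ (MA A) *ᵥ w = w' := by
  have hq0 : q ≠ 0 := by omega
  obtain ⟨B, hGram, hB0, hB1⟩ :=
    gram_basis h2 hadd hqq htr v w hv hv3 hw3 hvv hvw hwv hww
  obtain ⟨B', hGram', hB0', hB1'⟩ :=
    gram_basis h2 hadd hqq htr v' w' hv' hv3' hw3' hvv' hvw' hwv' hww'
  obtain ⟨hGU, hAB⟩ := gu_of_gram hq0 hadd hqq B B' hGram hGram'
  refine ⟨B' * (G F * (B.map (· ^ q))ᵀ), hGU, ?_, ?_⟩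
  · apply MA_lift
    · rw [hv3, hv3']
    · rw [← hB0, Matrix.mulVec_mulVec, hAB, hB0']
  · apply MA_lift
    · rw [hw3, hw3']
    · rw [← hB1, Matrix.mulVec_mulVec, hAB, hB1']

end Stmt1Aux

/-- `G_O` acts transitively on Baer subgenerators with a point in `O`. -/
theorem statement_1 (q : ℕ) (hq : IsPrimePow q) (F : Type) [Field F] [Fintype F]
    (hF : Fintype.card F = q ^ 2)
    (b b' : Set (PG3 F))
    (hb : IsBaerSubgenerator q b) (hbO : ∃ P ∈ b, P ∈ OCurve q F)
    (hb' : IsBaerSubgenerator q b') (hb'O : ∃ P ∈ b', P ∈ OCurve q F) :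
    ∃ A : Matrix (Fin 3) (Fin 3) F, IsGU3 q A ∧ matImage (MA A) b = b' := by
  obtain ⟨hadd, hqq, h2⟩ := Stmt1Aux.basic_facts q hq F hF
  have htr : ∀ r : F, r ^ q = r → ∃ d : F, d + d ^ q = r :=
    fun r hr => Stmt1Aux.trace_surj h2 hadd hqq hF r hr
  obtain ⟨v, w, hv, hv3, hw3, hvv, hvw, hwv, hww, hbeq⟩ :=
    Stmt1Aux.extract h2 hadd hqq b hb hbO
  obtain ⟨v', w', hv', hv3', hw3', hvv', hvw', hwv', hww', hbeq'⟩ :=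
    Stmt1Aux.extract h2 hadd hqq b' hb' hb'O
  obtain ⟨A, hGU, hAv, hAw⟩ := Stmt1Aux.construct h2 hadd hqq htr v w v' w'
    hv hv3 hw3 hvv hvw hwv hww hv' hv3' hw3' hvv' hvw' hwv' hww'
  refine ⟨A, hGU, ?_⟩
  rw [hbeq, hbeq']
  exact Stmt1Aux.matImage_baerSet (MA A) v w v' w' hAv hAw hv hv3 hw3 hv' hv3' hw3'
end

section
/- Let q be a prime power, let b be a Baer subgenerator of H(3,q²) with a point in the Hermitian curve O, and let A ∈ GU₃(q) be such that the collineation M_A = diag(A,1) maps b onto itself. Then det A = 1. -/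
open Projectivization Module Matrix

section AuxiliaryLemmas

open Projectivization Module Matrix

lemma pow_hom_exists (q : ℕ) (hq : IsPrimePow q) (F : Type) [Field F] [Fintype F]
    (hF : Fintype.card F = q ^ 2) : ∃ φ : F →+* F, ∀ x : F, φ x = x ^ q := by
  obtain ⟨p, s, hp, hs, rfl⟩ := hq
  have hp' : p.Prime := Nat.prime_iff.2 hp
  haveI : Fact (Nat.Prime (ringChar F)) := ⟨CharP.char_is_prime F _⟩
  obtain ⟨n, hn, hcard⟩ := FiniteField.card F (ringChar F)
  have hpc : p = ringChar F := by
    have hdvd : p ∣ ringChar F ^ (n : ℕ) := by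
      rw [← hcard, hF]
      exact dvd_pow (dvd_pow_self p hs.ne') (by norm_num)
    exact (Nat.prime_dvd_prime_iff_eq hp' hn).1 (hp'.dvd_of_dvd_pow hdvd)
  haveI : CharP F p := hpc ▸ ringChar.charP F
  haveI : ExpChar F p := ExpChar.prime hp'
  exact ⟨iterateFrobenius F p s, fun x => iterateFrobenius_def p s x⟩

lemma MA_mulVec_castSucc {F : Type} [Field F] (A : Matrix (Fin 3) (Fin 3) F)
    (x : Fin 4 → F) (i : Fin 3) :
    (MA A).mulVec x i.castSucc = A.mulVec (fun j => x j.castSucc) i := by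
  have h3 : ((3 : Fin 4) : ℕ) = 3 := rfl
  fin_cases i <;>
    simp [MA, Matrix.mulVec, dotProduct, Fin.sum_univ_four, Fin.sum_univ_three,
      Fin.castSucc, Fin.castAdd, Fin.castLE, h3]

lemma MA_mulVec_last {F : Type} [Field F] (A : Matrix (Fin 3) (Fin 3) F)
    (x : Fin 4 → F) :
    (MA A).mulVec x 3 = x 3 := by
  have h3 : ((3 : Fin 4) : ℕ) = 3 := rfl
  simp [MA, Matrix.mulVec, dotProduct, Fin.sum_univ_four, h3]

lemma eq_zero_of_restr {F : Type} [Field F] (x : Fin 4 → F) (h3 : x 3 = 0)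
    (hr : (fun i : Fin 3 => x i.castSucc) = 0) : x = 0 := by
  funext i
  refine Fin.lastCases ?_ ?_ i
  · exact h3
  · intro j; exact congrFun hr j

lemma herm_split {F : Type} [Field F] (q : ℕ) (x y : Fin 4 → F) :
    herm q x y = ((fun i : Fin 3 => x i.castSucc) ⬝ᵥ fun i : Fin 3 => (y i.castSucc) ^ q)
      + x 3 * (y 3) ^ q := by
  rw [herm, Fin.sum_univ_castSucc]
  rfl

lemma absurd_isotropic (q : ℕ) (F : Type) [Field F]
    (hq2 : ∀ x : F, (x ^ q) ^ q = x) (φ : F →+* F) (hφ : ∀ x : F, φ x = x ^ q)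
    (v' w' : Fin 3 → F)
    (hind : ∀ a c : F, a • v' + c • w' = 0 → a = 0 ∧ c = 0)
    (hvv : (v' ⬝ᵥ fun i => v' i ^ q) = 0) (hwv : (w' ⬝ᵥ fun i => v' i ^ q) = 0)
    (hvw : (v' ⬝ᵥ fun i => w' i ^ q) = 0) (hww : (w' ⬝ᵥ fun i => w' i ^ q) = 0) :
    False := by
  classical
  have hv'0 : v' ≠ 0 := by
    intro h
    exact one_ne_zero ((hind 1 0 (by simp [h])).1)
  obtain ⟨i0, hi0⟩ : ∃ i, v' i ≠ 0 := by
    by_contra h; push_neg at h; exact hv'0 (funext h)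
  have hi0q : (v' i0) ^ q ≠ 0 := pow_ne_zero _ hi0
  have hu : ∃ u : Fin 3 → F, (u ⬝ᵥ fun i => v' i ^ q) = 1 :=
    ⟨((v' i0) ^ q)⁻¹ • (Pi.single i0 1 : Fin 3 → F), by
      rw [smul_dotProduct, single_dotProduct, one_mul, smul_eq_mul,
        inv_mul_cancel₀ hi0q]⟩
  obtain ⟨u, huv⟩ := hu
  -- the triple is linearly independent
  have hindep : LinearIndependent F ![v', w', u] := by
    rw [Fintype.linearIndependent_iff]
    intro g hg
    rw [Fin.sum_univ_three] at hg
    simp only [Matrix.cons_val_zero, Matrix.cons_val_one, Matrix.head_cons,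
      Matrix.cons_val_two, Matrix.tail_cons] at hg
    have h2 : g 2 = 0 := by
      have := congrArg (fun y => y ⬝ᵥ fun i => v' i ^ q) hg
      simp only [add_dotProduct, smul_dotProduct, smul_eq_mul, zero_dotProduct,
        hvv, hwv, huv, mul_zero, mul_one, zero_add, add_zero] at this
      exact this
    rw [h2, zero_smul, add_zero] at hg
    have h01 := hind (g 0) (g 1) hg
    intro i; fin_cases i
    · exact h01.1
    · exact h01.2
    · exact h2
  have hcard : Fintype.card (Fin 3) = finrank F (Fin 3 → F) := by
    simp
  let B : Basis (Fin 3) F (Fin 3 → F) := basisOfLinearIndependentOfCardEqFinrank hindep hcard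
  have hB : ⇑B = ![v', w', u] := coe_basisOfLinearIndependentOfCardEqFinrank hindep hcard
  set d : F := u ⬝ᵥ fun i => w' i ^ q with hd
  set z : Fin 3 → F := (fun i => w' i ^ q) - d • (fun i => v' i ^ q) with hz
  have hzero : ∀ y : Fin 3 → F, y ⬝ᵥ z = 0 := by
    have hb0 : v' ⬝ᵥ z = 0 := by
      rw [hz, dotProduct_sub, dotProduct_smul, hvv, hvw, smul_zero, sub_zero]
    have hb1 : w' ⬝ᵥ z = 0 := by
      rw [hz, dotProduct_sub, dotProduct_smul, hwv, hww, smul_zero, sub_zero]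
    have hb2 : u ⬝ᵥ z = 0 := by
      rw [hz, dotProduct_sub, dotProduct_smul, huv, ← hd, smul_eq_mul, mul_one, sub_self]
    intro y
    have hy := B.sum_repr y
    rw [Fin.sum_univ_three] at hy
    rw [← hy]
    have e0 : B 0 = v' := by rw [hB]; rfl
    have e1 : B 1 = w' := by rw [hB]; rfl
    have e2 : B 2 = u := by rw [hB]; rfl
    rw [e0, e1, e2, add_dotProduct, add_dotProduct, smul_dotProduct, smul_dotProduct,
      smul_dotProduct, hb0, hb1, hb2]
    simp
  have hz0 : z = 0 := by
    funext j
    have := hzero (Pi.single j 1)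
    rw [single_dotProduct, one_mul] at this
    exact this
  set e : F := d ^ q with he
  have hwe : w' = e • v' := by
    funext j
    have hj : w' j ^ q = d * v' j ^ q := by
      have := congrFun hz0 j
      simp only [hz, Pi.sub_apply, Pi.smul_apply, smul_eq_mul, Pi.zero_apply] at this
      linear_combination this
    have : φ (w' j) = φ (e * v' j) := by
      rw [hφ, hφ, mul_pow, he, hq2, hj]
    exact φ.injective this
  have := hind e (-1) (by rw [hwe]; ring_nf; simp)
  exact one_ne_zero (neg_eq_zero.mp this.2)

lemma det_one_main (q : ℕ) (F : Type) [Field F]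
    (φ : F →+* F) (hφ : ∀ x : F, φ x = x ^ q)
    (A : Matrix (Fin 3) (Fin 3) F) (hGU : (A.map (· ^ q))ᵀ * A = 1)
    (v' w' : Fin 3 → F) (μ c : F) (hμq : μ ^ q = μ)
    (hAv : A.mulVec v' = μ • v') (hAw : A.mulVec w' = c • v' + w')
    (hv'0 : v' ≠ 0)
    (hvv : (v' ⬝ᵥ fun i => v' i ^ q) = 0) (hwv : (w' ⬝ᵥ fun i => v' i ^ q) = 0)
    (hvw : (v' ⬝ᵥ fun i => w' i ^ q) = 0) (hww : (w' ⬝ᵥ fun i => w' i ^ q) ≠ 0) :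
    A.det = 1 := by
  classical
  -- the unitary condition preserves the form
  have hpres : ∀ x y : Fin 3 → F,
      ((A.mulVec x) ⬝ᵥ fun i => (A.mulVec y) i ^ q) = x ⬝ᵥ fun i => y i ^ q := by
    intro x y
    have hmap : (fun i => (A.mulVec y) i ^ q)
        = (A.map (· ^ q)).mulVec (fun i => y i ^ q) := by
      funext i
      rw [Matrix.mulVec, Matrix.mulVec]
      show (dotProduct (A i) y) ^ q = _
      rw [dotProduct, dotProduct, ← hφ, map_sum]
      refine Finset.sum_congr rfl fun j _ => ?_
      rw [_root_.map_mul φ, hφ, hφ, Matrix.map_apply]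
    have h1 : Aᵀ * (A.map (· ^ q)) = 1 := by
      have h := congrArg Matrix.transpose hGU
      rwa [Matrix.transpose_mul, Matrix.transpose_transpose, Matrix.transpose_one] at h
    rw [hmap, dotProduct_comm, Matrix.dotProduct_mulVec, ← Matrix.mulVec_transpose,
      Matrix.mulVec_mulVec, h1, Matrix.one_mulVec, dotProduct_comm]
  have hμ0 : μ ≠ 0 := by
    intro h0
    have hA0 : A.mulVec v' = 0 := by rw [hAv, h0, zero_smul]
    have : v' = 0 := by
      have h2 := congrArg ((A.map (· ^ q))ᵀ).mulVec hA0
      rwa [Matrix.mulVec_mulVec, hGU, Matrix.one_mulVec, Matrix.mulVec_zero] at h2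
    exact hv'0 this
  obtain ⟨i0, hi0⟩ : ∃ i, v' i ≠ 0 := by
    by_contra h; push_neg at h; exact hv'0 (funext h)
  have hi0q : (v' i0) ^ q ≠ 0 := pow_ne_zero _ hi0
  obtain ⟨u, huv⟩ : ∃ u : Fin 3 → F, (u ⬝ᵥ fun i => v' i ^ q) = 1 :=
    ⟨((v' i0) ^ q)⁻¹ • (Pi.single i0 1 : Fin 3 → F), by
      rw [smul_dotProduct, single_dotProduct, one_mul, smul_eq_mul,
        inv_mul_cancel₀ hi0q]⟩
  have hindep : LinearIndependent F ![v', w', u] := by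
    rw [Fintype.linearIndependent_iff]
    intro g hg
    rw [Fin.sum_univ_three] at hg
    simp only [Matrix.cons_val_zero, Matrix.cons_val_one, Matrix.head_cons,
      Matrix.cons_val_two, Matrix.tail_cons] at hg
    have h2 : g 2 = 0 := by
      have := congrArg (fun y => y ⬝ᵥ fun i => v' i ^ q) hg
      simp only [add_dotProduct, smul_dotProduct, smul_eq_mul, zero_dotProduct,
        hvv, hwv, huv, mul_zero, mul_one, zero_add, add_zero] at this
      exact this
    have h1 : g 1 = 0 := by
      have := congrArg (fun y => y ⬝ᵥ fun i => w' i ^ q) hg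
      simp only [add_dotProduct, smul_dotProduct, smul_eq_mul, zero_dotProduct,
        hvw, mul_zero, zero_add] at this
      rw [h2, zero_mul, add_zero] at this
      exact (mul_eq_zero.mp this).resolve_right hww
    have h0 : g 0 = 0 := by
      rw [h1, h2, zero_smul, zero_smul, add_zero, add_zero, smul_eq_zero] at hg
      exact hg.resolve_right hv'0
    intro i; fin_cases i
    · exact h0
    · exact h1
    · exact h2
  have hcard : Fintype.card (Fin 3) = finrank F (Fin 3 → F) := by simp
  let B : Basis (Fin 3) F (Fin 3 → F) := basisOfLinearIndependentOfCardEqFinrank hindep hcard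
  have hB : ⇑B = ![v', w', u] := coe_basisOfLinearIndependentOfCardEqFinrank hindep hcard
  have e0 : B 0 = v' := by rw [hB]; rfl
  have e1 : B 1 = w' := by rw [hB]; rfl
  have e2 : B 2 = u := by rw [hB]; rfl
  set g : Fin 3 → F := fun i => B.repr (A.mulVec u) i with hgdef
  have hAu : A.mulVec u = g 0 • v' + g 1 • w' + g 2 • u := by
    have hy := B.sum_repr (A.mulVec u)
    rw [Fin.sum_univ_three, e0, e1, e2] at hy
    exact hy.symm
  have hg2 : μ * g 2 = 1 := by
    have h := hpres u v'
    rw [huv, hAv, hAu] at h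
    have hsm : (fun i => (μ • v') i ^ q) = (μ ^ q) • fun i => v' i ^ q := by
      funext i; simp [mul_pow]
    rw [hsm, dotProduct_smul, add_dotProduct, add_dotProduct, smul_dotProduct,
      smul_dotProduct, smul_dotProduct, hvv, hwv, huv] at h
    rw [hμq] at h
    simp only [smul_eq_mul, mul_zero, mul_one, zero_add, add_zero] at h
    linear_combination h
  set T : Matrix (Fin 3) (Fin 3) F := LinearMap.toMatrix B B (Matrix.toLin' A) with hTdef
  have hc0 : ∀ i, T i 0 = μ * (Finsupp.single (0 : Fin 3) (1 : F)) i := by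
    intro i
    rw [hTdef, LinearMap.toMatrix_apply, Matrix.toLin'_apply, e0, hAv, ← e0, _root_.map_smul,
      Basis.repr_self]
    rfl
  have hc1 : ∀ i, T i 1 = c * (Finsupp.single (0 : Fin 3) (1 : F)) i
      + (Finsupp.single (1 : Fin 3) (1 : F)) i := by
    intro i
    rw [hTdef, LinearMap.toMatrix_apply, Matrix.toLin'_apply, e1, hAw, ← e0, ← e1, map_add,
      _root_.map_smul, Basis.repr_self, Basis.repr_self]
    rfl
  have hc2 : ∀ i, T i 2 = g 0 * (Finsupp.single (0 : Fin 3) (1 : F)) i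
      + g 1 * (Finsupp.single (1 : Fin 3) (1 : F)) i
      + g 2 * (Finsupp.single (2 : Fin 3) (1 : F)) i := by
    intro i
    rw [hTdef, LinearMap.toMatrix_apply, Matrix.toLin'_apply, e2, hAu, ← e0, ← e1, ← e2,
      map_add, map_add, _root_.map_smul, _root_.map_smul, _root_.map_smul, Basis.repr_self,
      Basis.repr_self, Basis.repr_self]
    rfl
  have hdet : A.det = μ * g 2 := by
    have hd1 : A.det = LinearMap.det (Matrix.toLin' A) := (LinearMap.det_toLin' A).symm
    have hd2 : LinearMap.det (Matrix.toLin' A) = T.det := (LinearMap.det_toMatrix B _).symm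
    rw [hd1, hd2, Matrix.det_fin_three, hc0 0, hc0 1, hc0 2, hc1 0, hc1 1, hc1 2,
      hc2 0, hc2 1, hc2 2]
    simp [Finsupp.single_apply]
  rw [hdet, hg2]

end AuxiliaryLemmas


section MainLemmas

open Projectivization Module Matrix

lemma pencil_change (q : ℕ) (F : Type) [Field F]
    (φ : F →+* F) (hφ : ∀ x : F, φ x = x ^ q)
    (v w : Fin 4 → F) (hvw : LinearIndependent F ![v, w])
    (a₀ c₀ d₀ e₀ : F) (ha₀ : a₀ ^ q = a₀) (hc₀ : c₀ ^ q = c₀)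
    (hd₀ : d₀ ^ q = d₀) (he₀ : e₀ ^ q = e₀) (hdet : a₀ * e₀ - c₀ * d₀ ≠ 0) :
    LinearIndependent F ![a₀ • v + c₀ • w, d₀ • v + e₀ • w] ∧
    ∀ P : PG3 F,
      (∃ a c : F, a ^ q = a ∧ c ^ q = c ∧ a • (a₀ • v + c₀ • w) + c • (d₀ • v + e₀ • w) ≠ 0 ∧
        a • (a₀ • v + c₀ • w) + c • (d₀ • v + e₀ • w) ∈ P.submodule) ↔
      (∃ a c : F, a ^ q = a ∧ c ^ q = c ∧ a • v + c • w ≠ 0 ∧ a • v + c • w ∈ P.submodule) := by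
  have hpair := LinearIndependent.pair_iff.mp hvw
  have hcollect : ∀ a c : F, a • (a₀ • v + c₀ • w) + c • (d₀ • v + e₀ • w)
      = (a * a₀ + c * d₀) • v + (a * c₀ + c * e₀) • w := by
    intro a c; module
  constructor
  · rw [LinearIndependent.pair_iff]
    intro x y hxy
    rw [hcollect] at hxy
    obtain ⟨h1, h2⟩ := hpair _ _ hxy
    constructor
    · have hx : x * (a₀ * e₀ - c₀ * d₀) = 0 := by linear_combination e₀ * h1 - d₀ * h2
      exact (mul_eq_zero.mp hx).resolve_right hdet
    · have hy : y * (a₀ * e₀ - c₀ * d₀) = 0 := by linear_combination a₀ * h2 - c₀ * h1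
      exact (mul_eq_zero.mp hy).resolve_right hdet
  · intro P
    constructor
    · rintro ⟨a, c, ha, hc, hne, hmem⟩
      refine ⟨a * a₀ + c * d₀, a * c₀ + c * e₀, ?_, ?_, ?_, ?_⟩
      · rw [← hφ, map_add, _root_.map_mul, _root_.map_mul, hφ, hφ, hφ, hφ, ha, ha₀, hc, hd₀]
      · rw [← hφ, map_add, _root_.map_mul, _root_.map_mul, hφ, hφ, hφ, hφ, ha, hc₀, hc, he₀]
      · rw [← hcollect]; exact hne
      · rw [← hcollect]; exact hmem
    · rintro ⟨a, c, ha, hc, hne, hmem⟩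
      have hD : (a₀ * e₀ - c₀ * d₀) ^ q = a₀ * e₀ - c₀ * d₀ := by
        rw [← hφ, map_sub, _root_.map_mul, _root_.map_mul, hφ, hφ, hφ, hφ, ha₀, he₀, hc₀, hd₀]
      have hid : ((e₀ * a - d₀ * c) / (a₀ * e₀ - c₀ * d₀)) • (a₀ • v + c₀ • w)
          + ((a₀ * c - c₀ * a) / (a₀ * e₀ - c₀ * d₀)) • (d₀ • v + e₀ • w) = a • v + c • w := by
        rw [hcollect]
        have h1 : (e₀ * a - d₀ * c) / (a₀ * e₀ - c₀ * d₀) * a₀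
            + (a₀ * c - c₀ * a) / (a₀ * e₀ - c₀ * d₀) * d₀ = a := by
          rw [div_mul_eq_mul_div, div_mul_eq_mul_div, ← add_div, div_eq_iff hdet]
          ring
        have h2 : (e₀ * a - d₀ * c) / (a₀ * e₀ - c₀ * d₀) * c₀
            + (a₀ * c - c₀ * a) / (a₀ * e₀ - c₀ * d₀) * e₀ = c := by
          rw [div_mul_eq_mul_div, div_mul_eq_mul_div, ← add_div, div_eq_iff hdet]
          ring
        rw [h1, h2]
      refine ⟨(e₀ * a - d₀ * c) / (a₀ * e₀ - c₀ * d₀),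
        (a₀ * c - c₀ * a) / (a₀ * e₀ - c₀ * d₀), ?_, ?_, ?_, ?_⟩
      · rw [div_pow, hD, ← hφ, map_sub, _root_.map_mul, _root_.map_mul, hφ, hφ, hφ, hφ,
          he₀, ha, hd₀, hc]
      · rw [div_pow, hD, ← hφ, map_sub, _root_.map_mul, _root_.map_mul, hφ, hφ, hφ, hφ,
          ha₀, hc, hc₀, ha]
      · rw [hid]; exact hne
      · rw [hid]; exact hmem

lemma main_aux (q : ℕ) (hq0 : q ≠ 0) (F : Type) [Field F] [Fintype F]
    (hF : Fintype.card F = q ^ 2)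
    (φ : F →+* F) (hφ : ∀ x : F, φ x = x ^ q)
    (b : Set (PG3 F)) (v w : Fin 4 → F)
    (hvw : LinearIndependent F ![v, w])
    (hbeq : b = {P | ∃ a c : F, a ^ q = a ∧ c ^ q = c ∧
      a • v + c • w ≠ 0 ∧ a • v + c • w ∈ P.submodule})
    (hv3 : v 3 = 0)
    (hvv : herm q v v = 0) (hvw2 : herm q v w = 0)
    (hwv : herm q w v = 0) (hww : herm q w w = 0)
    (A : Matrix (Fin 3) (Fin 3) F) (hA : IsGU3 q A)
    (hfix : matImage (MA A) b = b) :
    A.det = 1 := by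
  classical
  have hq2 : ∀ x : F, (x ^ q) ^ q = x := by
    intro x
    rw [← pow_mul, ← pow_two, ← hF]
    exact FiniteField.pow_card x
  have hpair : ∀ a c : F, a • v + c • w = 0 → a = 0 ∧ c = 0 :=
    fun a c h => LinearIndependent.pair_iff.mp hvw a c h
  have hv0 : v ≠ 0 := by
    intro h; exact one_ne_zero ((hpair 1 0 (by simp [h])).1)
  have hw0 : w ≠ 0 := by
    intro h; exact one_ne_zero ((hpair 0 1 (by simp [h])).2)
  -- restricted form values
  have dvv : ((fun i : Fin 3 => v i.castSucc) ⬝ᵥ fun i : Fin 3 => (v i.castSucc) ^ q) = 0 := by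
    have h := herm_split q v v
    rw [hvv, hv3, zero_mul, add_zero] at h
    exact h.symm
  have dvw : ((fun i : Fin 3 => v i.castSucc) ⬝ᵥ fun i : Fin 3 => (w i.castSucc) ^ q) = 0 := by
    have h := herm_split q v w
    rw [hvw2, hv3, zero_mul, add_zero] at h
    exact h.symm
  have dwv : ((fun i : Fin 3 => w i.castSucc) ⬝ᵥ fun i : Fin 3 => (v i.castSucc) ^ q) = 0 := by
    have h := herm_split q w v
    rw [hwv, hv3] at h
    have h0 : (0 : F) ^ q = 0 := zero_pow hq0
    rw [h0, mul_zero, add_zero] at h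
    exact h.symm
  have dww : ((fun i : Fin 3 => w i.castSucc) ⬝ᵥ fun i : Fin 3 => (w i.castSucc) ^ q)
      = -(w 3 * (w 3) ^ q) := by
    have h := herm_split q w w
    rw [hww] at h
    linear_combination -h
  -- the transposed unitary relation
  have hGU : (A.map (· ^ q))ᵀ * A = 1 := mul_eq_one_comm.mp hA
  -- MA A is injective
  have hMinj : ∀ x : Fin 4 → F, (MA A).mulVec x = 0 → x = 0 := by
    intro x hx0
    have h3' : x 3 = 0 := by rw [← MA_mulVec_last A x, hx0]; rfl
    have hrA : A.mulVec (fun i : Fin 3 => x i.castSucc) = 0 := by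
      funext i; rw [← MA_mulVec_castSucc A x i, hx0]; rfl
    have hr : (fun i : Fin 3 => x i.castSucc) = 0 := by
      have h2 := congrArg ((A.map (· ^ q))ᵀ).mulVec hrA
      rwa [Matrix.mulVec_mulVec, hGU, Matrix.one_mulVec, Matrix.mulVec_zero] at h2
    exact eq_zero_of_restr x h3' hr
  -- the key consequence of stability of b
  have key : ∀ (x : Fin 4 → F) (hx : x ≠ 0),
      (∃ a c : F, a ^ q = a ∧ c ^ q = c ∧ x = a • v + c • w) →
      ∃ k a c : F, k ≠ 0 ∧ a ^ q = a ∧ c ^ q = c ∧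
        (MA A).mulVec x = k • (a • v + c • w) := by
    rintro x hx ⟨a, c, ha, hc, hxeq⟩
    have hmkb : Projectivization.mk F x hx ∈ b := by
      rw [hbeq]
      refine ⟨a, c, ha, hc, by rw [← hxeq]; exact hx, ?_⟩
      rw [Projectivization.submodule_mk, ← hxeq]
      exact Submodule.mem_span_singleton_self x
    have hMx : (MA A).mulVec x ≠ 0 := fun h => hx (hMinj x h)
    have hmem2 : Projectivization.mk F ((MA A).mulVec x) hMx ∈ matImage (MA A) b := by
      obtain ⟨d, hd⟩ := Projectivization.exists_smul_eq_mk_rep F x hx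
      refine ⟨Projectivization.mk F x hx, hmkb, ?_, ?_⟩
      · rw [← hd, Units.smul_def, Matrix.mulVec_smul]
        exact smul_ne_zero (Units.ne_zero d) hMx
      · rw [← hd, Units.smul_def, Matrix.mulVec_smul, Projectivization.submodule_mk]
        exact Submodule.smul_mem _ _ (Submodule.mem_span_singleton_self _)
    rw [hfix, hbeq] at hmem2
    obtain ⟨a', c', ha', hc', hy0, hymem⟩ := hmem2
    rw [Projectivization.submodule_mk] at hymem
    obtain ⟨s, hs⟩ := Submodule.mem_span_singleton.1 hymem
    have hs0 : s ≠ 0 := by rintro rfl; rw [zero_smul] at hs; exact hy0 hs.symm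
    exact ⟨s⁻¹, a', c', inv_ne_zero hs0, ha', hc',
      by rw [← hs, smul_smul, inv_mul_cancel₀ hs0, one_smul]⟩
  by_cases ht : w 3 = 0
  · -- degenerate case : impossible
    exfalso
    refine absurd_isotropic q F hq2 φ hφ
      (fun i : Fin 3 => v i.castSucc) (fun i : Fin 3 => w i.castSucc) ?_ dvv dwv dvw ?_
    · intro a c h
      refine hpair a c (eq_zero_of_restr _ (by simp [hv3, ht]) ?_)
      funext i
      simpa using congrFun h i
    · rw [dww, ht]
      simp
  · -- main case
    obtain ⟨k₁, a₁, c₁, hk₁, ha₁, hc₁, h₁⟩ :=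
      key v hv0 ⟨1, 0, one_pow q, zero_pow hq0, by simp⟩
    have hc₁0 : c₁ = 0 := by
      have h₁3 := congrFun h₁ 3
      rw [MA_mulVec_last] at h₁3
      simp only [Pi.smul_apply, Pi.add_apply, smul_eq_mul, hv3, mul_zero, zero_add] at h₁3
      have := h₁3.symm
      rcases mul_eq_zero.mp this with h | h
      · exact absurd h hk₁
      · rcases mul_eq_zero.mp h with h' | h'
        · exact h'
        · exact absurd h' ht
    rw [hc₁0, zero_smul, add_zero, smul_smul] at h₁
    obtain ⟨k₂, a₂, c₂, hk₂, ha₂, hc₂, h₂⟩ :=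
      key w hw0 ⟨0, 1, zero_pow hq0, one_pow q, by simp⟩
    have hkc : k₂ * c₂ = 1 := by
      have h₂3 := congrFun h₂ 3
      rw [MA_mulVec_last] at h₂3
      simp only [Pi.smul_apply, Pi.add_apply, smul_eq_mul, hv3, mul_zero, zero_add] at h₂3
      have : (k₂ * c₂) * w 3 = 1 * w 3 := by rw [one_mul]; linear_combination -h₂3
      exact mul_right_cancel₀ ht this
    have h₂' : (MA A).mulVec w = (k₂ * a₂) • v + w := by
      rw [h₂, smul_add, smul_smul, smul_smul, hkc, one_smul]
    have hvw0 : v + w ≠ 0 := by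
      intro h
      exact one_ne_zero ((hpair 1 1 (by simpa using h)).1)
    obtain ⟨k₃, a₃, c₃, hk₃, ha₃, hc₃, h₃⟩ :=
      key (v + w) hvw0 ⟨1, 1, one_pow q, one_pow q, by simp⟩
    rw [Matrix.mulVec_add, h₁, h₂'] at h₃
    have hcomp : ((k₁ * a₁) + (k₂ * a₂) - k₃ * a₃) • v + (1 - k₃ * c₃) • w = 0 := by
      have hmod : ((k₁ * a₁) + (k₂ * a₂) - k₃ * a₃) • v + (1 - k₃ * c₃) • w
          = ((k₁ * a₁) • v + ((k₂ * a₂) • v + w)) - k₃ • (a₃ • v + c₃ • w) := by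
        module
      rw [hmod, h₃, sub_self]
    obtain ⟨hcp1, hcp2⟩ := hpair _ _ hcomp
    have hk₃c₃ : k₃ * c₃ = 1 := by linear_combination -hcp2
    have hc₂0 : c₂ ≠ 0 := by
      intro h; rw [h, mul_zero] at hkc; exact zero_ne_one hkc
    have hc₃0 : c₃ ≠ 0 := by
      intro h; rw [h, mul_zero] at hk₃c₃; exact zero_ne_one hk₃c₃
    have hk₂q : k₂ ^ q = k₂ := by
      have hk2 : k₂ = c₂⁻¹ := by
        field_simp
        linear_combination hkc
      rw [hk2, inv_pow, hc₂]
    have hk₃q : k₃ ^ q = k₃ := by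
      have hk3 : k₃ = c₃⁻¹ := by
        field_simp
        linear_combination hk₃c₃
      rw [hk3, inv_pow, hc₃]
    have hμeq : k₁ * a₁ = k₃ * a₃ - k₂ * a₂ := by linear_combination hcp1
    have hμq : (k₁ * a₁) ^ q = k₁ * a₁ := by
      rw [hμeq, ← hφ, map_sub, _root_.map_mul, _root_.map_mul, hφ, hφ, hφ, hφ,
        hk₃q, ha₃, hk₂q, ha₂]
    -- transfer to dimension 3
    have hAv : A.mulVec (fun i : Fin 3 => v i.castSucc)
        = (k₁ * a₁) • (fun i : Fin 3 => v i.castSucc) := by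
      funext i
      rw [← MA_mulVec_castSucc, h₁]
      rfl
    have hAw : A.mulVec (fun i : Fin 3 => w i.castSucc)
        = (k₂ * a₂) • (fun i : Fin 3 => v i.castSucc) + (fun i : Fin 3 => w i.castSucc) := by
      funext i
      rw [← MA_mulVec_castSucc, h₂']
      rfl
    have hv'0 : (fun i : Fin 3 => v i.castSucc) ≠ (0 : Fin 3 → F) := by
      intro h; exact hv0 (eq_zero_of_restr v hv3 h)
    have hww' : ((fun i : Fin 3 => w i.castSucc) ⬝ᵥ fun i : Fin 3 => (w i.castSucc) ^ q) ≠ 0 := by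
      rw [dww]
      intro h
      rcases mul_eq_zero.mp (neg_eq_zero.mp h) with h' | h'
      · exact ht h'
      · exact ht (pow_eq_zero_iff hq0 |>.mp h')
    exact det_one_main q F φ hφ A hGU _ _ (k₁ * a₁) (k₂ * a₂) hμq hAv hAw hv'0 dvv dwv dvw hww'

end MainLemmas


/-- If `M_A` stabilises a Baer subgenerator with a point in `O`,
then `det A = 1`. -/
theorem statement_2 (q : ℕ) (hq : IsPrimePow q) (F : Type) [Field F] [Fintype F]
    (hF : Fintype.card F = q ^ 2)
    (b : Set (PG3 F))
    (hb : IsBaerSubgenerator q b) (hbO : ∃ P ∈ b, P ∈ OCurve q F)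
    (A : Matrix (Fin 3) (Fin 3) F) (hA : IsGU3 q A)
    (hfix : matImage (MA A) b = b) :
    A.det = 1 := by
  classical
  obtain ⟨⟨v, w, hvw, hbeq⟩, W, ⟨hW2, hWiso⟩, hbW⟩ := hb
  obtain ⟨φ, hφ⟩ := pow_hom_exists q hq F hF
  have hq0 : q ≠ 0 := by
    have := hq.one_lt; omega
  have hpair : ∀ a c : F, a • v + c • w = 0 → a = 0 ∧ c = 0 :=
    fun a c h => LinearIndependent.pair_iff.mp hvw a c h
  have hv0 : v ≠ 0 := fun h => one_ne_zero ((hpair 1 0 (by simp [h])).1)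
  have hw0 : w ≠ 0 := fun h => one_ne_zero ((hpair 0 1 (by simp [h])).2)
  have hmemb : ∀ (a c : F), a ^ q = a → c ^ q = c → ∀ (hx : a • v + c • w ≠ 0),
      Projectivization.mk F (a • v + c • w) hx ∈ b := by
    intro a c ha hc hx
    rw [hbeq]
    exact ⟨a, c, ha, hc, hx, by
      rw [Projectivization.submodule_mk]; exact Submodule.mem_span_singleton_self _⟩
  have hWof : ∀ (x : Fin 4 → F) (hx : x ≠ 0), Projectivization.mk F x hx ∈ b → x ∈ W := by
    intro x hx hmem
    have hrep := hbW _ hmem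
    obtain ⟨d, hd⟩ := Projectivization.exists_smul_eq_mk_rep F x hx
    have h1 : (d : F) • x ∈ W := by rw [← Units.smul_def, hd]; exact hrep
    have h2 := Submodule.smul_mem W ((d : F)⁻¹) h1
    rwa [smul_smul, inv_mul_cancel₀ (Units.ne_zero d), one_smul] at h2
  have hvW : v ∈ W := by
    have hx : (1 : F) • v + (0 : F) • w ≠ 0 := by simpa using hv0
    have := hWof _ hx (hmemb 1 0 (one_pow q) (zero_pow hq0) hx)
    simpa using this
  have hwW : w ∈ W := by
    have hx : (0 : F) • v + (1 : F) • w ≠ 0 := by simpa using hw0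
    have := hWof _ hx (hmemb 0 1 (zero_pow hq0) (one_pow q) hx)
    simpa using this
  obtain ⟨P₀, hP₀b, hP₀O⟩ := hbO
  have hP₀3 : P₀.rep 3 = 0 := hP₀O.2
  have hP₀' : P₀ ∈ {P : PG3 F | ∃ a c : F, a ^ q = a ∧ c ^ q = c ∧
      a • v + c • w ≠ 0 ∧ a • v + c • w ∈ P.submodule} := by
    rw [← hbeq]; exact hP₀b
  obtain ⟨a₀, c₀, ha₀, hc₀, hu0ne, hu0mem⟩ := hP₀'
  have hsub : P₀.submodule = (Submodule.span F {P₀.rep} : Submodule F (Fin 4 → F)) := by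
    conv_lhs => rw [← P₀.mk_rep]
    rw [Projectivization.submodule_mk]
  rw [hsub] at hu0mem
  obtain ⟨s₀, hs₀⟩ := Submodule.mem_span_singleton.1 hu0mem
  have hu₀3 : (a₀ • v + c₀ • w) 3 = 0 := by
    rw [← hs₀]
    simp [hP₀3]
  have hu₀W : (a₀ • v + c₀ • w) ∈ W := by
    rw [← hs₀]; exact Submodule.smul_mem _ _ (hbW _ hP₀b)
  obtain ⟨d₀, e₀, hd₀, he₀, hdet2⟩ : ∃ d₀ e₀ : F, d₀ ^ q = d₀ ∧ e₀ ^ q = e₀ ∧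
      a₀ * e₀ - c₀ * d₀ ≠ 0 := by
    by_cases hc : c₀ = 0
    · have ha : a₀ ≠ 0 := by
        intro h; apply hu0ne; rw [hc, h]; simp
      exact ⟨0, 1, zero_pow hq0, one_pow q, by simpa [hc] using ha⟩
    · exact ⟨1, 0, one_pow q, zero_pow hq0, by simpa using hc⟩
  obtain ⟨hind₀, hiff⟩ := pencil_change q F φ hφ v w hvw a₀ c₀ d₀ e₀ ha₀ hc₀ hd₀ he₀ hdet2
  have hbeq₀ : b = {P : PG3 F | ∃ a c : F, a ^ q = a ∧ c ^ q = c ∧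
      a • (a₀ • v + c₀ • w) + c • (d₀ • v + e₀ • w) ≠ 0 ∧
      a • (a₀ • v + c₀ • w) + c • (d₀ • v + e₀ • w) ∈ P.submodule} :=
    hbeq.trans (Set.ext fun P => (hiff P).symm)
  have hw₀W : (d₀ • v + e₀ • w) ∈ W :=
    Submodule.add_mem _ (Submodule.smul_mem _ _ hvW) (Submodule.smul_mem _ _ hwW)
  exact main_aux q hq0 F hF φ hφ b _ _ hind₀ hbeq₀ hu₀3
    (hWiso _ hu₀W _ hu₀W) (hWiso _ hu₀W _ hw₀W) (hWiso _ hw₀W _ hu₀W) (hWiso _ hw₀W _ hw₀W)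
    A hA hfix
end

section
/- Let q be a prime power and let L be a set of lines of the parabolic quadric Q(6,q) such that every point X of Q(6,q) is incident with exactly q+1 lines of L, all contained in a common plane X* of Q(6,q), and suppose the concurrency graph of L is connected. Let Π be a hyperplane of PG(6,q) meeting Q(6,q) in a nondegenerate elliptic quadric Q⁻(5,q). Then the set S := { X* ∩ Π : X a point of Q⁻(5,q) } is a spread of Q⁻(5,q): its members are lines of Q⁻(5,q), any two distinct members are disjoint, and every point of Q⁻(5,q) lies on a member of S. -/
open Projectivization Module Matrix

/-- Points of `PG(6,q)`. -/
abbrev PG6 (K : Type*) [Field K] := Projectivization K (Fin 7 → K)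

/-- The (nondegenerate, Witt index 3) parabolic quadratic form on `GF(q)⁷`. -/
def Qf {K : Type*} [Field K] (x : Fin 7 → K) : K :=
  x 0 * x 0 + x 1 * x 2 + x 3 * x 4 + x 5 * x 6

/-- The polar form of `Qf`. -/
def Qpolar {K : Type*} [Field K] (x y : Fin 7 → K) : K := Qf (x + y) - Qf x - Qf y

/-- The points of the parabolic quadric `Q(6,q)`. -/
def QPts (K : Type*) [Field K] : Set (PG6 K) := {P | Qf P.rep = 0}

/-- Lines of `Q(6,q)`: totally singular 2-dimensional subspaces. -/
def IsQLine {K : Type*} [Field K] (W : Submodule K (Fin 7 → K)) : Prop :=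
  finrank K W = 2 ∧ ∀ x ∈ W, Qf x = 0

/-- Planes of `Q(6,q)`: totally singular 3-dimensional subspaces. -/
def IsQPlane {K : Type*} [Field K] (W : Submodule K (Fin 7 → K)) : Prop :=
  finrank K W = 3 ∧ ∀ x ∈ W, Qf x = 0

/-- The concurrency graph of a set of lines: two lines are adjacent when they are distinct and
share a point. -/
def ConcGraph {K : Type*} [Field K] (L : Set (Submodule K (Fin 7 → K))) :
    SimpleGraph {W // W ∈ L} :=
  SimpleGraph.fromRel (fun W W' => W.val ⊓ W'.val ≠ ⊥)

/-- A hyperplane meeting `Q(6,q)` in a nondegenerate elliptic quadric `Q⁻(5,q)`: a 6-dimensional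
subspace on which the restricted quadratic form is nondegenerate of Witt index 2. -/
def IsEllipticHyperplane {K : Type*} [Field K] (Hyp : Submodule K (Fin 7 → K)) : Prop :=
  finrank K Hyp = 6 ∧
  (∀ x ∈ Hyp, Qf x = 0 → (∀ y ∈ Hyp, Qpolar x y = 0) → x = 0) ∧
  (∃ W : Submodule K (Fin 7 → K), IsQLine W ∧ W ≤ Hyp) ∧
  (∀ W : Submodule K (Fin 7 → K), IsQPlane W → ¬ W ≤ Hyp)


lemma Qf_smul {K : Type*} [Field K] (c : K) (x : Fin 7 → K) : Qf (c • x) = c ^ 2 * Qf x := by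
  simp only [Qf, Pi.smul_apply, smul_eq_mul]; ring

set_option linter.unusedSectionVars false
section Aux
variable {K : Type*} [Field K]
variable {M : Type*} [AddCommGroup M] [Module K M] [FiniteDimensional K M]

lemma inf_span_singleton_eq_bot {U : Submodule K M} {x : M} (hx : x ∉ U) :
    U ⊓ Submodule.span K {x} = ⊥ := by
  rw [eq_bot_iff]
  rintro z hz
  rw [Submodule.mem_inf] at hz
  obtain ⟨a, rfl⟩ := Submodule.mem_span_singleton.mp hz.2
  rcases eq_or_ne a 0 with rfl | ha
  · simp
  · exact absurd (by simpa [ha] using U.smul_mem a⁻¹ hz.1) hx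

lemma finrank_sup_span_singleton {U : Submodule K M} {x : M} (hx : x ∉ U) :
    finrank K ↥(U ⊔ Submodule.span K {x}) = finrank K U + 1 := by
  have h0 : x ≠ 0 := fun h => hx (h ▸ U.zero_mem)
  have h := Submodule.finrank_sup_add_finrank_inf_eq U (Submodule.span K {x})
  rw [inf_span_singleton_eq_bot hx, finrank_bot, finrank_span_singleton h0] at h
  omega

lemma finrank_span_pair {v x : M} (hv : v ≠ 0) (hx : x ∉ Submodule.span K {v}) :
    finrank K ↥(Submodule.span K {v, x}) = 2 := by
  rw [show ({v, x} : Set M) = insert v {x} from rfl, Submodule.span_insert]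
  rw [finrank_sup_span_singleton hx, finrank_span_singleton hv]

end Aux

section Geo
variable {K : Type*} [Field K] [Fintype K]

lemma plane_inf_hyp_rank (π Hyp : Submodule K (Fin 7 → K)) (hπ : IsQPlane π)
    (h6 : finrank K Hyp = 6) (hn : ¬ π ≤ Hyp) : finrank K ↥(π ⊓ Hyp) = 2 := by
  have h7 : finrank K (Fin 7 → K) = 7 := by simp
  have hsup := Submodule.finrank_sup_add_finrank_inf_eq π Hyp
  have hle7 : finrank K ↥(π ⊔ Hyp) ≤ 7 := by
    have := Submodule.finrank_le (π ⊔ Hyp)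
    rwa [h7] at this
  have hub : finrank K ↥(π ⊓ Hyp) ≤ 2 := by
    by_contra h'
    push_neg at h'
    have heq : π ⊓ Hyp = π := by
      apply Submodule.eq_of_le_of_finrank_le inf_le_left
      rw [hπ.1]
      omega
    refine hn ?_
    rw [← heq]
    exact inf_le_right
  rw [hπ.1, h6] at hsup
  omega

/-- Key lemma: for a singular point `v` of the hyperplane, the line `π ⊓ Hyp` cut out of the
pencil plane belongs to `L`. -/
lemma line_mem_L (q : ℕ) (hK : Fintype.card K = q)
    (L : Set (Submodule K (Fin 7 → K))) (hL : ∀ W ∈ L, IsQLine W)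
    (Hyp : Submodule K (Fin 7 → K)) (h6 : finrank K Hyp = 6)
    (hnp : ∀ W : Submodule K (Fin 7 → K), IsQPlane W → ¬ W ≤ Hyp)
    (v : Fin 7 → K) (hv : v ≠ 0) (hvH : v ∈ Hyp)
    (π : Submodule K (Fin 7 → K)) (hπ : IsQPlane π)
    (hall : ∀ l ∈ L, v ∈ l → l ≤ π)
    (hcard : Nat.card {W : Submodule K (Fin 7 → K) // W ∈ L ∧ v ∈ W} = q + 1) :
    π ⊓ Hyp ∈ L ∧ v ∈ π ⊓ Hyp := by
  haveI : Finite (Submodule K (Fin 7 → K)) :=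
    Finite.of_injective (fun W => (W : Set (Fin 7 → K))) SetLike.coe_injective
  -- there is at least one line of L through v
  have hne : Nonempty {W : Submodule K (Fin 7 → K) // W ∈ L ∧ v ∈ W} := by
    have : Nat.card {W : Submodule K (Fin 7 → K) // W ∈ L ∧ v ∈ W} ≠ 0 := by omega
    exact (Nat.card_ne_zero.mp this).1
  obtain ⟨⟨l₀, hl₀L, hl₀v⟩⟩ := hne
  have hvπ : v ∈ π := hall l₀ hl₀L hl₀v hl₀v
  have hvm : v ∈ π ⊓ Hyp := ⟨hvπ, hvH⟩
  refine ⟨?_, hvm⟩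
  set m := π ⊓ Hyp with hm
  have hmrank : finrank K ↥m = 2 := plane_inf_hyp_rank π Hyp hπ h6 (hnp π hπ)
  by_contra hmL
  -- pick e ∈ m \ span v and f ∈ π \ m
  have hsv : Submodule.span K {v} < m := by
    refine lt_of_le_of_ne ((Submodule.span_singleton_le_iff_mem v m).mpr hvm) ?_
    intro h
    rw [← h, finrank_span_singleton hv] at hmrank
    omega
  obtain ⟨e, hem, hev⟩ := SetLike.exists_of_lt hsv
  have hmπ : m < π := by
    refine lt_of_le_of_ne inf_le_left ?_
    intro h
    rw [h, hπ.1] at hmrank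
    omega
  obtain ⟨f, hfπ, hfm⟩ := SetLike.exists_of_lt hmπ
  have hsvm : Submodule.span K {v} ≤ m := (Submodule.span_singleton_le_iff_mem v m).mpr hvm
  have he0 : e ≠ 0 := fun h => hev (h ▸ (Submodule.span K {v}).zero_mem)
  -- key independence fact
  have hkey : ∀ b c : K, b • e + c • f ∈ Submodule.span K {v} → b = 0 ∧ c = 0 := by
    intro b c h
    have hc : c = 0 := by
      by_contra hc
      have : f = c⁻¹ • ((b • e + c • f) - b • e) := by
        rw [add_sub_cancel_left, smul_smul, inv_mul_cancel₀ hc, one_smul]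
      have hfmem : f ∈ m := by
        rw [this]
        exact m.smul_mem _ (m.sub_mem (hsvm h) (m.smul_mem b hem))
      exact hfm hfmem
    subst hc
    constructor
    · by_contra hb
      have he : e = b⁻¹ • (b • e + (0 : K) • f) := by
        rw [zero_smul, add_zero, smul_smul, inv_mul_cancel₀ hb, one_smul]
      have : e ∈ Submodule.span K {v} := by
        rw [he]
        exact (Submodule.span K {v}).smul_mem b⁻¹ h
      exact hev this
    · rfl
  have hxnv : ∀ c : K, e + c • f ∉ Submodule.span K {v} := by
    intro c h
    have := hkey 1 c (by rwa [one_smul])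
    exact one_ne_zero this.1
  have hfnv : f ∉ Submodule.span K {v} := by
    intro h
    have := hkey 0 1 (by rwa [zero_smul, one_smul, zero_add])
    exact one_ne_zero this.2
  -- the candidate set T and the parametrisation g
  set T : Set (Submodule K (Fin 7 → K)) :=
    {W | W ≤ π ∧ finrank K ↥W = 2 ∧ v ∈ W} with hT
  have hgT : ∀ o : Option K, (Option.rec (Submodule.span K {v, f})
      (fun c => Submodule.span K {v, e + c • f}) o : Submodule K (Fin 7 → K)) ∈ T := by
    rintro (_ | c)
    · refine ⟨Submodule.span_le.mpr ?_, finrank_span_pair hv hfnv,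
        Submodule.subset_span (by simp)⟩
      rintro x (rfl | rfl)
      · exact hvπ
      · exact hfπ
    · refine ⟨Submodule.span_le.mpr ?_, finrank_span_pair hv (hxnv c),
        Submodule.subset_span (by simp)⟩
      rintro x (rfl | rfl)
      · exact hvπ
      · exact π.add_mem (hmπ.le hem) (π.smul_mem c hfπ)
  -- π = span v ⊔ span {e, f}
  have hefv : Submodule.span K {v} ⊓ Submodule.span K ({e, f} : Set (Fin 7 → K)) = ⊥ := by
    rw [eq_bot_iff]
    rintro z hz
    rw [Submodule.mem_inf] at hz
    obtain ⟨b, c, rfl⟩ := Submodule.mem_span_pair.mp hz.2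
    obtain ⟨hb, hc⟩ := hkey b c hz.1
    simp [hb, hc]
  have hef : finrank K ↥(Submodule.span K ({e, f} : Set (Fin 7 → K))) = 2 := by
    refine finrank_span_pair he0 ?_
    intro h
    obtain ⟨a, rfl⟩ := Submodule.mem_span_singleton.mp h
    exact hfm (m.smul_mem a hem)
  have hπeq : π = Submodule.span K {v} ⊔ Submodule.span K ({e, f} : Set (Fin 7 → K)) := by
    symm
    apply Submodule.eq_of_le_of_finrank_le
    · refine sup_le ((Submodule.span_singleton_le_iff_mem v π).mpr hvπ)
        (Submodule.span_le.mpr ?_)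
      rintro x (rfl | rfl)
      · exact hmπ.le hem
      · exact hfπ
    · have := Submodule.finrank_sup_add_finrank_inf_eq (Submodule.span K {v})
        (Submodule.span K ({e, f} : Set (Fin 7 → K)))
      rw [hefv, finrank_bot, finrank_span_singleton hv, hef] at this
      rw [hπ.1]
      omega
  -- every member of T is in the range of g
  have hsur : ∀ W ∈ T, ∃ o : Option K, (Option.rec (Submodule.span K {v, f})
      (fun c => Submodule.span K {v, e + c • f}) o : Submodule K (Fin 7 → K)) = W := by
    rintro W ⟨hWπ, hW2, hWv⟩
    have hvW : Submodule.span K {v} < W := by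
      refine lt_of_le_of_ne ((Submodule.span_singleton_le_iff_mem v W).mpr hWv) ?_
      intro h
      rw [← h, finrank_span_singleton hv] at hW2
      omega
    obtain ⟨w, hwW, hwv⟩ := SetLike.exists_of_lt hvW
    have hwπ : w ∈ Submodule.span K {v} ⊔ Submodule.span K ({e, f} : Set (Fin 7 → K)) :=
      hπeq ▸ hWπ hwW
    obtain ⟨y, hy, z, hz, rfl⟩ := Submodule.mem_sup.mp hwπ
    obtain ⟨b, c, rfl⟩ := Submodule.mem_span_pair.mp hz
    have huW : b • e + c • f ∈ W := by
      have : (y + (b • e + c • f)) - y ∈ W := W.sub_mem hwW (hvW.le hy)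
      simpa using this
    have hunv : b • e + c • f ∉ Submodule.span K {v} := by
      intro h
      obtain ⟨hb, hc⟩ := hkey b c h
      refine hwv ?_
      rw [hb, hc]
      simpa using hy
    rcases eq_or_ne b 0 with rfl | hb
    · -- then c ≠ 0 and W = span {v, f}
      have hc : c ≠ 0 := by
        rintro rfl
        exact hunv (by simp)
      refine ⟨none, ?_⟩
      have hfW : f ∈ W := by
        have hfe : f = c⁻¹ • ((0 : K) • e + c • f) := by
          rw [zero_smul, zero_add, smul_smul, inv_mul_cancel₀ hc, one_smul]
        rw [hfe]
        exact W.smul_mem c⁻¹ huW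
      show Submodule.span K {v, f} = W
      apply Submodule.eq_of_le_of_finrank_le
      · apply Submodule.span_le.mpr
        rintro x (rfl | rfl)
        · exact hWv
        · exact hfW
      · rw [hW2, finrank_span_pair hv hfnv]
    · refine ⟨some (b⁻¹ * c), ?_⟩
      have hxW : e + (b⁻¹ * c) • f ∈ W := by
        have hxe : e + (b⁻¹ * c) • f = b⁻¹ • (b • e + c • f) := by
          rw [smul_add, smul_smul, smul_smul, inv_mul_cancel₀ hb, one_smul]
        rw [hxe]
        exact W.smul_mem b⁻¹ huW
      show Submodule.span K {v, e + (b⁻¹ * c) • f} = W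
      apply Submodule.eq_of_le_of_finrank_le
      · apply Submodule.span_le.mpr
        rintro x (rfl | rfl)
        · exact hWv
        · exact hxW
      · rw [hW2, finrank_span_pair hv (hxnv _)]
  -- counting
  have hTcard : Nat.card ↥T ≤ q + 1 := by
    have h1 : Nat.card ↥T ≤ Nat.card (Option K) := by
      apply Nat.card_le_card_of_surjective
        (fun o : Option K => (⟨_, hgT o⟩ : ↥T))
      rintro ⟨W, hW⟩
      obtain ⟨o, ho⟩ := hsur W hW
      exact ⟨o, Subtype.ext ho⟩
    have h2 : Nat.card (Option K) = q + 1 := by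
      rw [Nat.card_eq_fintype_card, Fintype.card_option, hK]
    omega
  set A : Set (Submodule K (Fin 7 → K)) := {W | W ∈ L ∧ v ∈ W} with hA
  have hAcard : A.ncard = q + 1 := by
    rw [← Nat.card_coe_set_eq]
    exact hcard
  have hAT : A ⊆ T := by
    rintro W ⟨hWL, hWv⟩
    exact ⟨hall W hWL hWv, (hL W hWL).1, hWv⟩
  have hmT : m ∈ T := ⟨inf_le_left, hmrank, hvm⟩
  have hmA : m ∉ A := fun h => hmL h.1
  have hins : insert m A ⊆ T := Set.insert_subset hmT hAT
  have h1 : (insert m A).ncard = q + 2 := by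
    rw [Set.ncard_insert_of_notMem hmA (Set.toFinite A), hAcard]
  have h2 : (insert m A).ncard ≤ T.ncard := Set.ncard_le_ncard hins (Set.toFinite T)
  rw [Nat.card_coe_set_eq] at hTcard
  omega

end Geo

/-- With `L` as before and the concurrency graph of `L` connected, the
intersections of the planes `X*` (for `X` ranging over the points of an elliptic hyperplane
section `Q⁻(5,q)`) with the hyperplane form a spread of `Q⁻(5,q)`. -/
theorem statement_8 (q : ℕ) (hq : IsPrimePow q) (K : Type) [Field K] [Fintype K]
    (hK : Fintype.card K = q)
    (L : Set (Submodule K (Fin 7 → K)))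
    (hL : ∀ W ∈ L, IsQLine W)
    (hpencil : ∀ P ∈ QPts K,
      Nat.card {W : Submodule K (Fin 7 → K) // W ∈ L ∧ P.rep ∈ W} = q + 1 ∧
      ∃ π : Submodule K (Fin 7 → K), IsQPlane π ∧ ∀ W ∈ L, P.rep ∈ W → W ≤ π)
    (hconn : (ConcGraph L).Connected)
    (Hyp : Submodule K (Fin 7 → K)) (hHyp : IsEllipticHyperplane Hyp)
    (S : Set (Submodule K (Fin 7 → K)))
    (hS : S = {W | ∃ (X : PG6 K) (π : Submodule K (Fin 7 → K)),
      X ∈ QPts K ∧ X.rep ∈ Hyp ∧ IsQPlane π ∧ (∀ l ∈ L, X.rep ∈ l → l ≤ π) ∧ W = π ⊓ Hyp}) :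
    (∀ W ∈ S, finrank K W = 2 ∧ (∀ x ∈ W, Qf x = 0) ∧ W ≤ Hyp) ∧
    (∀ W₁ ∈ S, ∀ W₂ ∈ S, W₁ = W₂ ∨ W₁ ⊓ W₂ = ⊥) ∧
    (∀ P ∈ QPts K, P.rep ∈ Hyp → ∃ W ∈ S, P.rep ∈ W) := by
  subst hS
  obtain ⟨h6, -, -, hnp⟩ := hHyp
  haveI : FiniteDimensional K (Fin 7 → K) := inferInstance
  refine ⟨?_, ?_, ?_⟩
  · rintro W ⟨X, π, hXQ, hXH, hπ, hall, rfl⟩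
    exact ⟨plane_inf_hyp_rank π Hyp hπ h6 (hnp π hπ),
      fun x hx => hπ.2 x (Submodule.mem_inf.mp hx).1, inf_le_right⟩
  · rintro W₁ ⟨X₁, π₁, hX₁Q, hX₁H, hπ₁, hall₁, rfl⟩ W₂ ⟨X₂, π₂, hX₂Q, hX₂H, hπ₂, hall₂, rfl⟩
    by_cases hbot : (π₁ ⊓ Hyp) ⊓ (π₂ ⊓ Hyp) = ⊥
    · exact Or.inr hbot
    left
    obtain ⟨x, hx, hx0⟩ := (Submodule.ne_bot_iff _).mp hbot
    rw [Submodule.mem_inf] at hx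
    have hl₁ := line_mem_L q hK L hL Hyp h6 hnp X₁.rep (Projectivization.rep_nonzero X₁)
      hX₁H π₁ hπ₁ hall₁ (hpencil X₁ hX₁Q).1
    have hl₂ := line_mem_L q hK L hL Hyp h6 hnp X₂.rep (Projectivization.rep_nonzero X₂)
      hX₂H π₂ hπ₂ hall₂ (hpencil X₂ hX₂Q).1
    set Z : PG6 K := Projectivization.mk K x hx0 with hZ
    obtain ⟨a, ha⟩ := Projectivization.exists_smul_eq_mk_rep K x hx0
    have hxQf : Qf x = 0 := hπ₁.2 x (Submodule.mem_inf.mp hx.1).1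
    have hZQ : Z ∈ QPts K := by
      show Qf Z.rep = 0
      rw [← ha, Units.smul_def, Qf_smul, hxQf, mul_zero]
    have hZ₁ : Z.rep ∈ π₁ ⊓ Hyp := by
      rw [← ha, Units.smul_def]
      exact (π₁ ⊓ Hyp).smul_mem _ hx.1
    have hZ₂ : Z.rep ∈ π₂ ⊓ Hyp := by
      rw [← ha, Units.smul_def]
      exact (π₂ ⊓ Hyp).smul_mem _ hx.2
    obtain ⟨hcZ, πZ, hπZ, hallZ⟩ := hpencil Z hZQ
    have hrZ : finrank K ↥(πZ ⊓ Hyp) = 2 := plane_inf_hyp_rank πZ Hyp hπZ h6 (hnp πZ hπZ)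
    have e₁ : π₁ ⊓ Hyp = πZ ⊓ Hyp := by
      apply Submodule.eq_of_le_of_finrank_le
        (le_inf (hallZ _ hl₁.1 hZ₁) inf_le_right)
      rw [hrZ, plane_inf_hyp_rank π₁ Hyp hπ₁ h6 (hnp π₁ hπ₁)]
    have e₂ : π₂ ⊓ Hyp = πZ ⊓ Hyp := by
      apply Submodule.eq_of_le_of_finrank_le
        (le_inf (hallZ _ hl₂.1 hZ₂) inf_le_right)
      rw [hrZ, plane_inf_hyp_rank π₂ Hyp hπ₂ h6 (hnp π₂ hπ₂)]
    rw [e₁, e₂]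
  · intro P hPQ hPH
    obtain ⟨hc, π, hπ, hall⟩ := hpencil P hPQ
    have h := line_mem_L q hK L hL Hyp h6 hnp P.rep (Projectivization.rep_nonzero P)
      hPH π hπ hall hc
    exact ⟨π ⊓ Hyp, ⟨P, π, hPQ, hPH, hπ, hall, rfl⟩, h.2⟩
end

section
/- Let s, t ≥ 2 be integers and let Γ be a finite partial linear space in which every line is incident with exactly s+1 points and every point is incident with exactly t+1 lines, having exactly (s+1)(1+st+s²t²) points and (t+1)(1+st+s²t²) lines, and whose bipartite incidence graph contains no cycle of length less than 12 (i.e., Γ contains no ordinary k-gon for 2 ≤ k ≤ 5). Then Γ is a generalised hexagon of order (s,t): its incidence graph is connected with diameter 6 and girth 12. -/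
open SimpleGraph Sum


section IncLemmas
variable {P L : Type} {I : P → L → Prop}

lemma incg_adj_iff {p : P} {l : L} : (IncGraph I).Adj (inl p) (inr l) ↔ I p l := by
  simp [IncGraph, SimpleGraph.fromRel_adj]

lemma incg_not_adj_ll {p p' : P} : ¬ (IncGraph I).Adj (inl p) (inl p') := by
  simp [IncGraph, SimpleGraph.fromRel_adj]

lemma incg_not_adj_rr {l l' : L} : ¬ (IncGraph I).Adj (inr l) (inr l') := by
  simp [IncGraph, SimpleGraph.fromRel_adj]

lemma incg_adj_inl {p : P} {x : P ⊕ L} (h : (IncGraph I).Adj (inl p) x) :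
    ∃ l, x = inr l ∧ I p l := by
  cases x with
  | inl p' => exact absurd h incg_not_adj_ll
  | inr l => exact ⟨l, rfl, incg_adj_iff.mp h⟩

lemma incg_adj_inr {l : L} {x : P ⊕ L} (h : (IncGraph I).Adj (inr l) x) :
    ∃ p, x = inl p ∧ I p l := by
  cases x with
  | inl p => exact ⟨p, rfl, incg_adj_iff.mp h.symm⟩
  | inr l' => exact absurd h incg_not_adj_rr

lemma incg_parity {x y : P ⊕ L} (w : (IncGraph I).Walk x y) :
    (x.isLeft = y.isLeft) ↔ Even w.length := by
  induction w with
  | nil => simp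
  | cons h w' ih =>
    rename_i a z c --
    have hz : z.isLeft = !a.isLeft := by
      cases a with
      | inl p => obtain ⟨l, rfl, -⟩ := incg_adj_inl h; rfl
      | inr l => obtain ⟨p, rfl, -⟩ := incg_adj_inr h; rfl
    rw [Walk.length_cons]
    rw [Nat.even_add_one, ← ih, hz]
    cases a.isLeft <;> cases c.isLeft <;> simp

end IncLemmas

section CardLemmas

lemma nat_card_erase {α : Type} [Finite α] {Q : α → Prop} {a : α} (ha : Q a) :
    Nat.card {x // Q x ∧ x ≠ a} + 1 = Nat.card {x // Q x} := by
  classical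
  have e1 : {y : {x // Q x} // y ≠ ⟨a, ha⟩} ≃ {x // Q x ∧ x ≠ a} :=
    (Equiv.subtypeEquivRight (q := fun y : {x // Q x} => (y : α) ≠ a)
      (fun y => by simp [Subtype.ext_iff])).trans
      (Equiv.subtypeSubtypeEquivSubtypeInter Q (· ≠ a))
  have e2 : Option {y : {x // Q x} // y ≠ ⟨a, ha⟩} ≃ {x // Q x} :=
    Equiv.optionSubtypeNe (⟨a, ha⟩ : {x // Q x})
  calc Nat.card {x // Q x ∧ x ≠ a} + 1
      = Nat.card {y : {x // Q x} // y ≠ ⟨a, ha⟩} + 1 := by rw [Nat.card_congr e1]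
    _ = Nat.card (Option {y : {x // Q x} // y ≠ ⟨a, ha⟩}) := by
        rw [Nat.card_congr (Equiv.optionEquivSumPUnit.{0,0} _), Nat.card_sum]
        simp
    _ = Nat.card {x // Q x} := Nat.card_congr e2

lemma nat_card_sigma_const {ι : Type} [Finite ι] {f : ι → Type} [∀ i, Finite (f i)] {k : ℕ}
    (h : ∀ i, Nat.card (f i) = k) : Nat.card (Σ i, f i) = Nat.card ι * k := by
  cases nonempty_fintype ι
  letI : ∀ i, Fintype (f i) := fun i => Fintype.ofFinite _
  rw [Nat.card_eq_fintype_card, Fintype.card_sigma, Nat.card_eq_fintype_card]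
  have hk : ∀ i : ι, Fintype.card (f i) = k := fun i => by rw [← Nat.card_eq_fintype_card, h i]
  rw [Finset.sum_congr rfl fun i _ => hk i, Finset.sum_const, smul_eq_mul, Fintype.card]

end CardLemmas


section GraphLemmas
variable {V : Type} {G : SimpleGraph V}

/-- Two distinct paths between the same endpoints yield a cycle of bounded length. -/
lemma exists_cycle_of_two_paths :
    ∀ (n : ℕ) {u v : V} (p q : G.Walk u v), p.length + q.length ≤ n → p.IsPath → q.IsPath →
      p ≠ q → ∃ (w : V) (c : G.Walk w w), c.IsCycle ∧ c.length ≤ p.length + q.length := by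
  classical
  intro n
  induction n with
  | zero =>
    intro u v p q hlen hp hq hne
    cases p with
    | nil =>
      have : q = Walk.nil := by
        have := SimpleGraph.Path.loop_eq ⟨q, hq⟩
        exact congrArg Subtype.val this
      exact absurd this.symm hne
    | cons h p' => simp [Walk.length_cons] at hlen
  | succ n ih =>
    intro u v p q hlen hp hq hne
    cases p with
    | nil =>
      have : q = Walk.nil := by
        have := SimpleGraph.Path.loop_eq ⟨q, hq⟩
        exact congrArg Subtype.val this
      exact absurd this.symm hne
    | cons h p' =>
      cases q with
      | nil =>
        have : Walk.cons h p' = Walk.nil := by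
          have := SimpleGraph.Path.loop_eq ⟨Walk.cons h p', hp⟩
          exact congrArg Subtype.val this
        simp at this
      | cons h' q' =>
        rename_i a b
        by_cases hab : a = b
        · subst hab
          have hpq' : p' ≠ q' := by
            intro hh; apply hne; rw [hh]
          have hlen' : p'.length + q'.length ≤ n := by
            simp [Walk.length_cons] at hlen; omega
          obtain ⟨w, c, hc, hlc⟩ := ih p' q' hlen' hp.of_cons hq.of_cons hpq'
          exact ⟨w, c, hc, by simp [Walk.length_cons]; omega⟩
        · set W : G.Walk a u := p'.append (Walk.cons h' q').reverse with hW
          have hne_edge : s(u, a) ∉ W.bypass.edges := by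
            intro hmem
            have hmem' := W.edges_bypass_subset hmem
            rw [hW, Walk.edges_append] at hmem'
            rcases List.mem_append.mp hmem' with hm | hm
            · have : u ∈ p'.support := p'.fst_mem_support_of_mem_edges hm
              exact (Walk.cons_isPath_iff h p').mp hp |>.2 this
            · rw [Walk.edges_reverse, List.mem_reverse] at hm
              rw [Walk.edges_cons] at hm
              rcases List.mem_cons.mp hm with hm' | hm'
              · exact hab (Sym2.congr_right.mp hm')
              · have : u ∈ q'.support := q'.fst_mem_support_of_mem_edges hm'
                exact (Walk.cons_isPath_iff h' q').mp hq |>.2 this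
          refine ⟨u, Walk.cons h W.bypass, ?_, ?_⟩
          · exact (Walk.cons_isCycle_iff W.bypass h).mpr ⟨W.bypass_isPath, hne_edge⟩
          · have h1 : W.bypass.length ≤ W.length := W.length_bypass_le
            have h2 : W.length = p'.length + q'.length + 1 := by
              rw [hW, Walk.length_append, Walk.length_reverse, Walk.length_cons]; omega
            simp only [Walk.length_cons]
            omega

lemma path_unique_of_girth (h12 : 12 ≤ G.egirth) {u v : V} (p q : G.Walk u v)
    (hp : p.IsPath) (hq : q.IsPath) (hl : p.length + q.length < 12) : p = q := by
  by_contra hne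
  obtain ⟨w, c, hc, hlc⟩ := exists_cycle_of_two_paths (p.length + q.length) p q le_rfl hp hq hne
  have := SimpleGraph.le_egirth.mp h12 w c hc
  have hcast : (c.length : ℕ∞) < 12 := by
    exact_mod_cast lt_of_le_of_lt (Nat.cast_le.mpr hlc) (by exact_mod_cast hl)
  exact absurd (lt_of_lt_of_le hcast this).false (by simp)

lemma egirth_le_cycle {w : V} {c : G.Walk w w} (hc : c.IsCycle) : G.egirth ≤ c.length :=
  iInf_le_of_le w (iInf_le_of_le c (iInf_le _ hc))

end GraphLemmas

section Chains
variable {P L : Type} (I : P → L → Prop) (p₀ : P)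

abbrev T1 := {l : L // I p₀ l}
abbrev T3 := {x : L × P × L //
  I p₀ x.1 ∧ I x.2.1 x.1 ∧ x.2.1 ≠ p₀ ∧ I x.2.1 x.2.2 ∧ x.2.2 ≠ x.1}
abbrev T5 := {x : L × P × L × P × L //
  I p₀ x.1 ∧ I x.2.1 x.1 ∧ x.2.1 ≠ p₀ ∧ I x.2.1 x.2.2.1 ∧ x.2.2.1 ≠ x.1 ∧
  I x.2.2.2.1 x.2.2.1 ∧ x.2.2.2.1 ≠ x.2.1 ∧ I x.2.2.2.1 x.2.2.2.2 ∧ x.2.2.2.2 ≠ x.2.2.1}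

variable {I p₀}

def chainEnd : T1 I p₀ ⊕ T3 I p₀ ⊕ T5 I p₀ → L
  | .inl z => z.1
  | .inr (.inl z) => z.1.2.2
  | .inr (.inr z) => z.1.2.2.2.2

def chainSupp : T1 I p₀ ⊕ T3 I p₀ ⊕ T5 I p₀ → List (P ⊕ L)
  | .inl z => [inl p₀, inr z.1]
  | .inr (.inl z) => [inl p₀, inr z.1.1, inl z.1.2.1, inr z.1.2.2]
  | .inr (.inr z) => [inl p₀, inr z.1.1, inl z.1.2.1, inr z.1.2.2.1, inl z.1.2.2.2.1,
      inr z.1.2.2.2.2]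

lemma chainSupp_inj : Function.Injective (chainSupp (I := I) (p₀ := p₀)) := by
  rintro (⟨l, hl⟩ | ⟨⟨l₁, p₁, l₂⟩, h⟩ | ⟨⟨l₁, p₁, l₂, p₂, l₃⟩, h⟩)
    (⟨l', hl'⟩ | ⟨⟨l₁', p₁', l₂'⟩, h'⟩ | ⟨⟨l₁', p₁', l₂', p₂', l₃'⟩, h'⟩) he <;>
    simp [chainSupp] at he
  · obtain rfl := he; rfl
  · obtain ⟨rfl, rfl, rfl⟩ := he; rfl
  · obtain ⟨rfl, rfl, rfl, rfl, rfl⟩ := he; rfl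

lemma no_digon (hpls : ∀ p₁ p₂ : P, p₁ ≠ p₂ → ∀ l₁ l₂ : L,
      I p₁ l₁ → I p₂ l₁ → I p₁ l₂ → I p₂ l₂ → l₁ = l₂)
    {p q : P} {l m : L} (hpq : q ≠ p) (hlm : m ≠ l)
    (h1 : I p l) (h2 : I q l) (h3 : I p m) (h4 : I q m) : False :=
  hlm (hpls q p hpq m l h4 h3 h2 h1)

lemma chain_walk (hpls : ∀ p₁ p₂ : P, p₁ ≠ p₂ → ∀ l₁ l₂ : L,
      I p₁ l₁ → I p₂ l₁ → I p₁ l₂ → I p₂ l₂ → l₁ = l₂)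
    (z : T1 I p₀ ⊕ T3 I p₀ ⊕ T5 I p₀) :
    ∃ w : (IncGraph I).Walk (inl p₀) (inr (chainEnd z)),
      w.IsPath ∧ w.length ≤ 5 ∧ w.support = chainSupp z := by
  rcases z with ⟨l, hl⟩ | ⟨⟨l₁, p₁, l₂⟩, h1, h2, h3, h4, h5⟩ |
    ⟨⟨l₁, p₁, l₂, p₂, l₃⟩, h1, h2, h3, h4, h5, h6, h7, h8, h9⟩
  all_goals dsimp only [chainEnd] at *
  · refine ⟨.cons (incg_adj_iff.mpr hl) .nil, ?_, by simp, by simp [chainSupp, chainEnd]⟩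
    simp [Walk.isPath_def]
  · refine ⟨.cons (incg_adj_iff.mpr h1) (.cons (incg_adj_iff.mpr h2).symm
      (.cons (incg_adj_iff.mpr h4) .nil)), ?_, by simp, by simp [chainSupp, chainEnd]⟩
    simp [Walk.isPath_def, h3, h5, h3.symm, h5.symm]
  · have hp20 : p₂ ≠ p₀ := by
      rintro rfl
      exact no_digon hpls h3 h5 h1 h2 h6 h4
    have hl31 : l₃ ≠ l₁ := by
      rintro rfl
      exact no_digon hpls h7 h5.symm h4 h6 h2 h8
    refine ⟨.cons (incg_adj_iff.mpr h1) (.cons (incg_adj_iff.mpr h2).symm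
      (.cons (incg_adj_iff.mpr h4) (.cons (incg_adj_iff.mpr h6).symm
      (.cons (incg_adj_iff.mpr h8) .nil)))), ?_, by simp, by simp [chainSupp, chainEnd]⟩
    simp [Walk.isPath_def, h3, h5, h7, h9, hp20, hl31, h3.symm, h5.symm, h7.symm, h9.symm,
      hp20.symm, hl31.symm]

end Chains

section Core
variable {P L : Type} [Fintype P] [Fintype L] {s t : ℕ} {I : P → L → Prop}

theorem core
    (hpls : ∀ p₁ p₂ : P, p₁ ≠ p₂ → ∀ l₁ l₂ : L,
      I p₁ l₁ → I p₂ l₁ → I p₁ l₂ → I p₂ l₂ → l₁ = l₂)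
    (hline : ∀ l : L, Nat.card {p : P // I p l} = s + 1)
    (hpt : ∀ p : P, Nat.card {l : L // I p l} = t + 1)
    (hL : Fintype.card L = (t + 1) * (1 + s * t + s ^ 2 * t ^ 2))
    (hgirth : 12 ≤ (IncGraph I).egirth) (p₀ : P) (l : L) :
    ∃ w : (IncGraph I).Walk (inl p₀) (inr l), w.IsPath ∧ w.length ≤ 5 := by
  classical
  have cardStepP : ∀ (m : L) (p : P), I p m → Nat.card {q : P // I q m ∧ q ≠ p} = s := by
    intro m p h
    have h2 : Nat.card {q : P // I q m ∧ q ≠ p} + 1 = s + 1 := by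
      rw [← hline m]; exact nat_card_erase (Q := fun q => I q m) (a := p) h
    omega
  have cardStepL : ∀ (p : P) (m : L), I p m → Nat.card {n : L // I p n ∧ n ≠ m} = t := by
    intro p m h
    have h2 : Nat.card {n : L // I p n ∧ n ≠ m} + 1 = t + 1 := by
      rw [← hpt p]; exact nat_card_erase (Q := fun n => I p n) (a := m) h
    omega
  have e3 : T3 I p₀ ≃ Σ a : T1 I p₀, Σ p₁ : {p : P // I p a.1 ∧ p ≠ p₀},
      {m : L // I p₁.1 m ∧ m ≠ a.1} :=
    { toFun := fun x => ⟨⟨x.1.1, x.2.1⟩, ⟨x.1.2.1, x.2.2.1, x.2.2.2.1⟩,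
        ⟨x.1.2.2, x.2.2.2.2.1, x.2.2.2.2.2⟩⟩
      invFun := fun c => ⟨(c.1.1, c.2.1.1, c.2.2.1),
        c.1.2, c.2.1.2.1, c.2.1.2.2, c.2.2.2.1, c.2.2.2.2⟩
      left_inv := fun _ => rfl
      right_inv := fun _ => rfl }
  have fiber3 : ∀ a : T1 I p₀,
      Nat.card ((p₁ : {p : P // I p a.1 ∧ p ≠ p₀}) × {m : L // I p₁.1 m ∧ m ≠ a.1}) = s * t := by
    intro a
    have h1 := nat_card_sigma_const
      (f := fun p₁ : {p : P // I p a.1 ∧ p ≠ p₀} => {m : L // I p₁.1 m ∧ m ≠ a.1})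
      (k := t) (fun p₁ => cardStepL p₁.1 a.1 p₁.2.1)
    rw [h1, cardStepP a.1 p₀ a.2]
  have cardT3 : Nat.card (T3 I p₀) = (t + 1) * (s * t) := by
    rw [Nat.card_congr e3, nat_card_sigma_const fiber3,
      show Nat.card (T1 I p₀) = t + 1 from hpt p₀]
  have e5 : T5 I p₀ ≃ Σ c : T3 I p₀, Σ p₂ : {p : P // I p c.1.2.2 ∧ p ≠ c.1.2.1},
      {m : L // I p₂.1 m ∧ m ≠ c.1.2.2} :=
    { toFun := fun x => ⟨⟨(x.1.1, x.1.2.1, x.1.2.2.1),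
        x.2.1, x.2.2.1, x.2.2.2.1, x.2.2.2.2.1, x.2.2.2.2.2.1⟩,
        ⟨x.1.2.2.2.1, x.2.2.2.2.2.2.1, x.2.2.2.2.2.2.2.1⟩,
        ⟨x.1.2.2.2.2, x.2.2.2.2.2.2.2.2.1, x.2.2.2.2.2.2.2.2.2⟩⟩
      invFun := fun c => ⟨(c.1.1.1, c.1.1.2.1, c.1.1.2.2, c.2.1.1, c.2.2.1),
        c.1.2.1, c.1.2.2.1, c.1.2.2.2.1, c.1.2.2.2.2.1, c.1.2.2.2.2.2,
        c.2.1.2.1, c.2.1.2.2, c.2.2.2.1, c.2.2.2.2⟩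
      left_inv := fun _ => rfl
      right_inv := fun _ => rfl }
  have fiber5 : ∀ c : T3 I p₀,
      Nat.card ((p₂ : {p : P // I p c.1.2.2 ∧ p ≠ c.1.2.1}) ×
        {m : L // I p₂.1 m ∧ m ≠ c.1.2.2}) = s * t := by
    intro c
    have h1 := nat_card_sigma_const
      (f := fun p₂ : {p : P // I p c.1.2.2 ∧ p ≠ c.1.2.1} => {m : L // I p₂.1 m ∧ m ≠ c.1.2.2})
      (k := t) (fun p₂ => cardStepL p₂.1 c.1.2.2 p₂.2.1)
    rw [h1, cardStepP c.1.2.2 c.1.2.1 c.2.2.2.2.1]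
  have cardT5 : Nat.card (T5 I p₀) = (t + 1) * (s * t) * (s * t) := by
    rw [Nat.card_congr e5, nat_card_sigma_const fiber5, cardT3]
  have cardSum : Nat.card (T1 I p₀ ⊕ T3 I p₀ ⊕ T5 I p₀) = Nat.card L := by
    rw [Nat.card_sum, Nat.card_sum, cardT3, cardT5,
      show Nat.card (T1 I p₀) = t + 1 from hpt p₀, Nat.card_eq_fintype_card, hL]
    ring
  have hinj : Function.Injective (chainEnd (I := I) (p₀ := p₀)) := by
    intro x y hxy
    obtain ⟨wx, hwxp, hwxl, hwxs⟩ := chain_walk hpls x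
    obtain ⟨wy, hwyp, hwyl, hwys⟩ := chain_walk hpls y
    have heq : wx = wy.copy rfl (by rw [hxy]) := by
      refine path_unique_of_girth hgirth _ _ hwxp (by simpa using hwyp) ?_
      rw [Walk.length_copy]; omega
    apply chainSupp_inj
    rw [← hwxs, ← hwys, heq, Walk.support_copy]
  have hsurj := ((Nat.bijective_iff_injective_and_card _).mpr ⟨hinj, cardSum⟩).surjective
  obtain ⟨z, hz⟩ := hsurj l
  obtain ⟨w, hwp, hwl, -⟩ := chain_walk hpls z
  exact ⟨w.copy rfl (by rw [hz]), by simpa using hwp, by rw [Walk.length_copy]; exact hwl⟩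

end Core

section Even
variable {P L : Type} {I : P → L → Prop} {p₀ : P}

abbrev D2 (I : P → L → Prop) (p₀ : P) := {x : L × P // I p₀ x.1 ∧ I x.2 x.1 ∧ x.2 ≠ p₀}
abbrev D4 (I : P → L → Prop) (p₀ : P) := {x : L × P × L × P //
  I p₀ x.1 ∧ I x.2.1 x.1 ∧ x.2.1 ≠ p₀ ∧ I x.2.1 x.2.2.1 ∧ x.2.2.1 ≠ x.1 ∧
  I x.2.2.2 x.2.2.1 ∧ x.2.2.2 ≠ x.2.1}

def evEnd : Unit ⊕ D2 I p₀ ⊕ D4 I p₀ → P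
  | .inl _ => p₀
  | .inr (.inl z) => z.1.2
  | .inr (.inr z) => z.1.2.2.2

def evSupp : Unit ⊕ D2 I p₀ ⊕ D4 I p₀ → List (P ⊕ L)
  | .inl _ => [inl p₀]
  | .inr (.inl z) => [inl p₀, inr z.1.1, inl z.1.2]
  | .inr (.inr z) => [inl p₀, inr z.1.1, inl z.1.2.1, inr z.1.2.2.1, inl z.1.2.2.2]

lemma evSupp_inj : Function.Injective (evSupp (I := I) (p₀ := p₀)) := by
  rintro (⟨⟩ | ⟨⟨l₁, p₁⟩, h⟩ | ⟨⟨l₁, p₁, l₂, p₂⟩, h⟩)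
    (⟨⟩ | ⟨⟨l₁', p₁'⟩, h'⟩ | ⟨⟨l₁', p₁', l₂', p₂'⟩, h'⟩) he <;>
    simp [evSupp] at he
  · rfl
  · obtain ⟨rfl, rfl⟩ := he; rfl
  · obtain ⟨rfl, rfl, rfl, rfl⟩ := he; rfl

lemma ev_walk (hpls : ∀ p₁ p₂ : P, p₁ ≠ p₂ → ∀ l₁ l₂ : L,
      I p₁ l₁ → I p₂ l₁ → I p₁ l₂ → I p₂ l₂ → l₁ = l₂)
    (z : Unit ⊕ D2 I p₀ ⊕ D4 I p₀) :
    ∃ w : (IncGraph I).Walk (inl p₀) (inl (evEnd z)),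
      w.IsPath ∧ w.length ≤ 4 ∧ w.support = evSupp z := by
  rcases z with ⟨⟩ | ⟨⟨l₁, p₁⟩, h1, h2, h3⟩ | ⟨⟨l₁, p₁, l₂, p₂⟩, h1, h2, h3, h4, h5, h6, h7⟩
  all_goals dsimp only [evEnd] at *
  · exact ⟨.nil, by simp, by simp, by simp [evSupp, evEnd]⟩
  · refine ⟨.cons (incg_adj_iff.mpr h1) (.cons (incg_adj_iff.mpr h2).symm .nil), ?_,
      by simp, by simp [evSupp, evEnd]⟩
    simp [Walk.isPath_def, h3, h3.symm]
  · have hp20 : p₂ ≠ p₀ := by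
      rintro rfl
      exact no_digon hpls h3 h5 h1 h2 h6 h4
    refine ⟨.cons (incg_adj_iff.mpr h1) (.cons (incg_adj_iff.mpr h2).symm
      (.cons (incg_adj_iff.mpr h4) (.cons (incg_adj_iff.mpr h6).symm .nil))), ?_,
      by simp, by simp [evSupp, evEnd]⟩
    simp [Walk.isPath_def, h3, h5, h7, hp20, h3.symm, h5.symm, h7.symm, hp20.symm]

lemma walk_len0 {V : Type} {G : SimpleGraph V} {u v : V} (w : G.Walk u v) (h : w.length = 0) :
    u = v := by
  cases w with
  | nil => rfl
  | cons h' w' => simp [Walk.length_cons] at h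

lemma even_extract {p' : P}
    (w : (IncGraph I).Walk (inl p₀) (inl p')) (hw : w.IsPath) (hl : w.length ≤ 4)
    (hne0 : p₀ ≠ p') :
    ∃ z : Unit ⊕ D2 I p₀ ⊕ D4 I p₀, evEnd z = p' := by
  obtain ⟨x₁, a1, w1, rfl⟩ := Walk.exists_eq_cons_of_ne (by simpa using hne0) w
  obtain ⟨l₁, rfl, hi1⟩ := incg_adj_inl a1
  obtain ⟨x₂, a2, w2, rfl⟩ := Walk.exists_eq_cons_of_ne (by simp) w1
  obtain ⟨p₁, rfl, hi2⟩ := incg_adj_inr a2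
  have hsup := hw.support_nodup
  simp only [Walk.support_cons, List.nodup_cons] at hsup
  have hp₁0 : p₁ ≠ p₀ := by
    rintro rfl
    exact hsup.1 (by simp [Walk.start_mem_support])
  by_cases hp₁ : p₁ = p'
  · subst hp₁
    exact ⟨.inr (.inl ⟨(l₁, p₁), hi1, hi2, hp₁0⟩), rfl⟩
  · obtain ⟨x₃, a3, w3, rfl⟩ := Walk.exists_eq_cons_of_ne (by simpa using hp₁) w2
    obtain ⟨l₂, rfl, hi3⟩ := incg_adj_inl a3
    obtain ⟨x₄, a4, w4, rfl⟩ := Walk.exists_eq_cons_of_ne (by simp) w3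
    obtain ⟨p₂, rfl, hi4⟩ := incg_adj_inr a4
    have hlen4 : w4.length = 0 := by
      simp only [Walk.length_cons] at hl; omega
    have hp₂ : p₂ = p' := by simpa using walk_len0 w4 hlen4
    subst hp₂
    have hsup2 := hw.support_nodup
    simp only [Walk.support_cons, List.nodup_cons, List.mem_cons] at hsup2
    have hl₂1 : l₂ ≠ l₁ := by
      rintro rfl
      exact hsup2.2.1 (Or.inr (Or.inl rfl))
    have hp₂1 : p₂ ≠ p₁ := by
      rintro rfl
      exact hsup2.2.2.1 (Or.inr (Walk.start_mem_support w4))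
    exact ⟨.inr (.inr ⟨(l₁, p₁, l₂, p₂), hi1, hi2, hp₁0, hi3, hl₂1, hi4, hp₂1⟩), rfl⟩

end Even

/-- A finite partial linear space of order `(s,t)` with `(s+1)(1+st+s²t²)`
points, `(t+1)(1+st+s²t²)` lines and no ordinary `k`-gon for `2 ≤ k ≤ 5` (i.e. no cycle of
length `< 12` in the incidence graph) is a generalised hexagon of order `(s,t)`: its incidence
graph is connected with diameter `6` and girth `12`. -/
theorem statement_11 (s t : ℕ) (hs : 2 ≤ s) (ht : 2 ≤ t)
    (P L : Type) [Fintype P] [Fintype L] (I : P → L → Prop)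
    (hpls : ∀ p₁ p₂ : P, p₁ ≠ p₂ → ∀ l₁ l₂ : L,
      I p₁ l₁ → I p₂ l₁ → I p₁ l₂ → I p₂ l₂ → l₁ = l₂)
    (hline : ∀ l : L, Nat.card {p : P // I p l} = s + 1)
    (hpt : ∀ p : P, Nat.card {l : L // I p l} = t + 1)
    (hP : Fintype.card P = (s + 1) * (1 + s * t + s ^ 2 * t ^ 2))
    (hL : Fintype.card L = (t + 1) * (1 + s * t + s ^ 2 * t ^ 2))
    (hgirth : 12 ≤ (IncGraph I).egirth) :
    (IncGraph I).Connected ∧ (IncGraph I).diam = 6 ∧ (IncGraph I).girth = 12 := by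
  classical
  have hPpos : 0 < Fintype.card P := by rw [hP]; positivity
  obtain ⟨p₀⟩ : Nonempty P := Fintype.card_pos_iff.mp hPpos
  have hcore : ∀ (p : P) (l : L), ∃ w : (IncGraph I).Walk (inl p) (inr l),
      w.IsPath ∧ w.length ≤ 5 := fun p l => core hpls hline hpt hL hgirth p l
  have hPL : ∀ (p : P) (l : L), (IncGraph I).edist (inl p) (inr l) ≤ 5 := by
    intro p l; obtain ⟨w, -, hl5⟩ := hcore p l
    exact le_trans (SimpleGraph.edist_le w) (by exact_mod_cast hl5)
  have linethrough : ∀ p : P, ∃ l, I p l := by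
    intro p
    have hpos : 0 < Nat.card {l : L // I p l} := by rw [hpt p]; omega
    obtain ⟨⟨l, hl⟩⟩ := (Nat.card_pos_iff.mp hpos).1
    exact ⟨l, hl⟩
  have ptson : ∀ l : L, ∃ p, I p l := by
    intro l
    have hpos : 0 < Nat.card {p : P // I p l} := by rw [hline l]; omega
    obtain ⟨⟨p, hp⟩⟩ := (Nat.card_pos_iff.mp hpos).1
    exact ⟨p, hp⟩
  have hPP : ∀ p p' : P, (IncGraph I).edist (inl p) (inl p') ≤ 6 := by
    intro p p'
    obtain ⟨m, hm⟩ := linethrough p'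
    calc (IncGraph I).edist (inl p) (inl p')
        ≤ (IncGraph I).edist (inl p) (inr m) + (IncGraph I).edist (inr m) (inl p') :=
          SimpleGraph.edist_triangle
      _ ≤ 5 + 1 := add_le_add (hPL p m) (by
          rw [SimpleGraph.edist_comm]
          exact (SimpleGraph.edist_eq_one_iff_adj.mpr (incg_adj_iff.mpr hm)).le)
      _ = 6 := by norm_num
  have hLL : ∀ l l' : L, (IncGraph I).edist (inr l) (inr l') ≤ 6 := by
    intro l l'
    obtain ⟨q, hq⟩ := ptson l
    calc (IncGraph I).edist (inr l) (inr l')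
        ≤ (IncGraph I).edist (inr l) (inl q) + (IncGraph I).edist (inl q) (inr l') :=
          SimpleGraph.edist_triangle
      _ ≤ 1 + 5 := add_le_add (by
          rw [SimpleGraph.edist_comm]
          exact (SimpleGraph.edist_eq_one_iff_adj.mpr (incg_adj_iff.mpr hq)).le) (hPL q l')
      _ = 6 := by norm_num
  have hall : ∀ u v : P ⊕ L, (IncGraph I).edist u v ≤ 6 := by
    rintro (p | l) (p' | l')
    · exact hPP p p'
    · exact le_trans (hPL p l') (by norm_num)
    · rw [SimpleGraph.edist_comm]; exact le_trans (hPL p' l) (by norm_num)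
    · exact hLL l l'
  have hconn : (IncGraph I).Connected := by
    rw [SimpleGraph.connected_iff]
    exact ⟨fun u v => SimpleGraph.reachable_of_edist_ne_top
      (lt_of_le_of_lt (hall u v) (lt_top_iff_ne_top.mpr (by simp))).ne, ⟨inl p₀⟩⟩
  -- counting of points at even distance ≤ 4 from p₀
  have cardStepP : ∀ (m : L) (p : P), I p m → Nat.card {q : P // I q m ∧ q ≠ p} = s := by
    intro m p h
    have h2 : Nat.card {q : P // I q m ∧ q ≠ p} + 1 = s + 1 := by
      rw [← hline m]; exact nat_card_erase (Q := fun q => I q m) (a := p) h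
    omega
  have cardStepL : ∀ (p : P) (m : L), I p m → Nat.card {n : L // I p n ∧ n ≠ m} = t := by
    intro p m h
    have h2 : Nat.card {n : L // I p n ∧ n ≠ m} + 1 = t + 1 := by
      rw [← hpt p]; exact nat_card_erase (Q := fun n => I p n) (a := m) h
    omega
  have eD2 : D2 I p₀ ≃ Σ a : T1 I p₀, {p : P // I p a.1 ∧ p ≠ p₀} :=
    { toFun := fun x => ⟨⟨x.1.1, x.2.1⟩, ⟨x.1.2, x.2.2.1, x.2.2.2⟩⟩
      invFun := fun c => ⟨(c.1.1, c.2.1), c.1.2, c.2.2.1, c.2.2.2⟩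
      left_inv := fun _ => rfl
      right_inv := fun _ => rfl }
  have cardD2 : Nat.card (D2 I p₀) = (t + 1) * s := by
    rw [Nat.card_congr eD2, nat_card_sigma_const
      (f := fun a : T1 I p₀ => {p : P // I p a.1 ∧ p ≠ p₀}) (k := s)
      (fun a => cardStepP a.1 p₀ a.2),
      show Nat.card (T1 I p₀) = t + 1 from hpt p₀]
  have eD4 : D4 I p₀ ≃ Σ c : D2 I p₀, Σ m : {m : L // I c.1.2 m ∧ m ≠ c.1.1},
      {q : P // I q m.1 ∧ q ≠ c.1.2} :=
    { toFun := fun x => ⟨⟨(x.1.1, x.1.2.1), x.2.1, x.2.2.1, x.2.2.2.1⟩,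
        ⟨x.1.2.2.1, x.2.2.2.2.1, x.2.2.2.2.2.1⟩,
        ⟨x.1.2.2.2, x.2.2.2.2.2.2.1, x.2.2.2.2.2.2.2⟩⟩
      invFun := fun c => ⟨(c.1.1.1, c.1.1.2, c.2.1.1, c.2.2.1),
        c.1.2.1, c.1.2.2.1, c.1.2.2.2, c.2.1.2.1, c.2.1.2.2, c.2.2.2.1, c.2.2.2.2⟩
      left_inv := fun _ => rfl
      right_inv := fun _ => rfl }
  have fiberD : ∀ c : D2 I p₀, Nat.card ((m : {m : L // I c.1.2 m ∧ m ≠ c.1.1}) ×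
      {q : P // I q m.1 ∧ q ≠ c.1.2}) = t * s := by
    intro c
    have h1 := nat_card_sigma_const
      (f := fun m : {m : L // I c.1.2 m ∧ m ≠ c.1.1} => {q : P // I q m.1 ∧ q ≠ c.1.2})
      (k := s) (fun m => cardStepP m.1 c.1.2 m.2.1)
    rw [h1, cardStepL c.1.2 c.1.1 c.2.2.1]
  have cardD4 : Nat.card (D4 I p₀) = (t + 1) * s * (t * s) := by
    rw [Nat.card_congr eD4, nat_card_sigma_const fiberD, cardD2]
  have cardEv : Nat.card (Unit ⊕ D2 I p₀ ⊕ D4 I p₀) =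
      1 + (t + 1) * s + (t + 1) * s * (t * s) := by
    rw [Nat.card_sum, Nat.card_sum, cardD2, cardD4, Nat.card_eq_fintype_card]
    simp only [Fintype.card_unit]
    omega
  have hnotsurj : ¬ Function.Surjective (evEnd (I := I) (p₀ := p₀)) := by
    intro hsurj
    have hle := Nat.card_le_card_of_surjective _ hsurj
    rw [cardEv, Nat.card_eq_fintype_card, hP] at hle
    nlinarith [hs, ht]
  rw [Function.Surjective] at hnotsurj
  push_neg at hnotsurj
  obtain ⟨p', hp'⟩ := hnotsurj
  have hp'0 : p₀ ≠ p' := fun h => hp' (.inl ()) h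
  have hfar : ∀ w : (IncGraph I).Walk (inl p₀) (inl p'), 5 ≤ w.length := by
    intro w
    by_contra hlt
    push_neg at hlt
    obtain ⟨z, hz⟩ := even_extract w.bypass w.bypass_isPath
      (le_trans w.length_bypass_le (by omega)) hp'0
    exact hp' z hz
  have hfar6 : ∀ w : (IncGraph I).Walk (inl p₀) (inl p'), 6 ≤ w.length := by
    intro w
    have h5 := hfar w
    obtain ⟨k, hk⟩ := (incg_parity w).mp rfl
    omega
  have hedist6 : (IncGraph I).edist (inl p₀) (inl p') = 6 := by
    have hle := hPP p₀ p'
    obtain ⟨w, hw⟩ := SimpleGraph.exists_walk_of_edist_ne_top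
      (lt_of_le_of_lt hle (lt_top_iff_ne_top.mpr (by simp))).ne
    refine le_antisymm hle ?_
    rw [← hw]
    exact_mod_cast hfar6 w
  have hediam : (IncGraph I).ediam = 6 :=
    le_antisymm (SimpleGraph.ediam_le_of_edist_le hall) (hedist6 ▸ SimpleGraph.edist_le_ediam)
  have hdiam : (IncGraph I).diam = 6 := by
    rw [SimpleGraph.diam, hediam]; rfl
  -- girth
  have hnt : Nontrivial {l : L // I p' l} := by
    rw [← Finite.one_lt_card_iff_nontrivial, hpt p']; omega
  obtain ⟨⟨l₁, hl₁⟩, ⟨l₂, hl₂⟩, hne12⟩ := hnt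
  have hlne : l₁ ≠ l₂ := fun h => hne12 (Subtype.ext h)
  have mk : ∀ (l : L), I p' l → ∃ Q : (IncGraph I).Walk (inl p₀) (inl p'),
      Q.IsPath ∧ Q.length = 6 ∧ s(inl p', (inr l : P ⊕ L)) ∈ Q.edges ∧
      (∀ m : L, s(inl p', (inr m : P ⊕ L)) ∈ Q.edges → m = l) := by
    intro l hl
    obtain ⟨w, hwp, hwl⟩ := hcore p₀ l
    have hadj' : (IncGraph I).Adj (inr l) (inl p') := (incg_adj_iff.mpr hl).symm
    have hw5 : w.length = 5 := by
      by_contra hne5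
      have h6 := hfar6 (w.concat hadj')
      rw [Walk.length_concat] at h6
      omega
    have hp'w : (inl p' : P ⊕ L) ∉ w.support := by
      intro hmem
      have := Walk.length_takeUntil_le w hmem
      have := hfar6 (w.takeUntil (inl p') hmem)
      omega
    have hadj : (IncGraph I).Adj (inl p') (inr l) := incg_adj_iff.mpr hl
    refine ⟨(Walk.cons hadj w.reverse).reverse, ?_, ?_, ?_, ?_⟩
    · refine Walk.IsPath.reverse ?_
      rw [Walk.cons_isPath_iff]
      refine ⟨hwp.reverse, ?_⟩
      rw [Walk.support_reverse, List.mem_reverse]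
      exact hp'w
    · simp [Walk.length_reverse, Walk.length_cons, hw5]
    · rw [Walk.edges_reverse, List.mem_reverse, Walk.edges_cons]
      exact List.mem_cons_self
    · intro m hm
      rw [Walk.edges_reverse, List.mem_reverse, Walk.edges_cons] at hm
      rcases List.mem_cons.mp hm with hm' | hm'
      · have := Sym2.congr_right.mp hm'
        exact inr.injEq m l ▸ this
      · rw [Walk.edges_reverse, List.mem_reverse] at hm'
        exact absurd (w.fst_mem_support_of_mem_edges hm') hp'w
  obtain ⟨Q₁, hQ₁p, hQ₁l, hQ₁e, hQ₁u⟩ := mk l₁ hl₁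
  obtain ⟨Q₂, hQ₂p, hQ₂l, hQ₂e, hQ₂u⟩ := mk l₂ hl₂
  have hQne : Q₁ ≠ Q₂ := fun h => hlne (hQ₂u l₁ (h ▸ hQ₁e))
  obtain ⟨v, c, hc, hcl⟩ := exists_cycle_of_two_paths 12 Q₁ Q₂ (by omega) hQ₁p hQ₂p hQne
  have h12 : 12 ≤ c.length := by
    exact_mod_cast SimpleGraph.le_egirth.mp hgirth v c hc
  have hcl12 : c.length = 12 := by omega
  have hgeq : (IncGraph I).egirth = 12 := by
    refine le_antisymm ?_ hgirth
    have := egirth_le_cycle hc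
    rw [hcl12] at this
    exact_mod_cast this
  refine ⟨hconn, hdiam, ?_⟩
  rw [SimpleGraph.girth, hgeq]; rfl
end

section
/- Let q be a prime power and let λ ∈ GF(q²) with λ^{q+1} = −1. Then: (i) for any two nonzero vectors v, w ∈ GF(q²)² with v₁ = λ·v₀^q and w₁ = λ·w₀^q, there exists a 2×2 matrix C over GF(q²) with det C = 1 and C·(C^{(q)})ᵀ = I such that C·v = w; and (ii) every such matrix C maps the set { v ∈ GF(q²)² \ {0} : v₁ = λ·v₀^q } to itself. In other words, the orbits of SU₂(q) on the nonzero isotropic vectors of the Hermitian form X₀Y₀^q + X₁Y₁^q on GF(q²)² are precisely the sets on which v₁/v₀^q is constant. -/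
open Matrix Polynomial

/-- The orbits of `SU₂(q)` on the nonzero isotropic vectors of the Hermitian
form `X₀Y₀^q + X₁Y₁^q` on `GF(q²)²` are exactly the sets on which `v₁/v₀^q` is constant. -/
theorem statement_12 (q : ℕ) (hq : IsPrimePow q) (F : Type) [Field F] [Fintype F]
    (hF : Fintype.card F = q ^ 2)
    (lam : F) (hlam : lam ^ (q + 1) = -1) :
    (∀ v w : Fin 2 → F, v ≠ 0 → w ≠ 0 →
      v 1 = lam * (v 0) ^ q → w 1 = lam * (w 0) ^ q →
      ∃ C : Matrix (Fin 2) (Fin 2) F,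
        C.det = 1 ∧ C * (C.map (· ^ q))ᵀ = 1 ∧ C.mulVec v = w) ∧
    (∀ C : Matrix (Fin 2) (Fin 2) F, C.det = 1 → C * (C.map (· ^ q))ᵀ = 1 →
      C.mulVec '' {v : Fin 2 → F | v ≠ 0 ∧ v 1 = lam * (v 0) ^ q} =
        {v : Fin 2 → F | v ≠ 0 ∧ v 1 = lam * (v 0) ^ q}) := by
  -- basic facts about q and the characteristic
  have hq2 : 2 ≤ q := hq.two_le
  obtain ⟨p, k, hpp, hkpos, hpk⟩ := hq
  have hp : p.Prime := hpp.nat_prime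
  haveI : Fact p.Prime := ⟨hp⟩
  -- the characteristic of F is p
  haveI hcharF : CharP F p := by
    have h1 : CharP F (ringChar F) := ringChar.charP F
    obtain ⟨n, hrp, hcard⟩ := FiniteField.card F (ringChar F)
    have hpr : p = ringChar F := by
      have hdvd : p ∣ (ringChar F) ^ (n : ℕ) := by
        rw [← hcard, hF, ← hpk, ← pow_mul]
        exact dvd_pow_self p (by omega)
      exact ((Nat.prime_dvd_prime_iff_eq hp hrp).mp (hp.dvd_of_dvd_pow hdvd))
    rwa [hpr]
  -- Frobenius-type facts
  have hadd : ∀ x y : F, (x + y) ^ q = x ^ q + y ^ q := by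
    intro x y; rw [← hpk]; exact add_pow_char_pow ..
  have hneg : ∀ x : F, (-x) ^ q = -(x ^ q) := by
    intro x
    have h := hadd x (-x)
    rw [add_neg_cancel, zero_pow (by omega : q ≠ 0)] at h
    linear_combination -h
  have hqq : ∀ x : F, (x ^ q) ^ q = x := by
    intro x
    rw [← pow_mul, ← sq, ← hF]
    exact FiniteField.pow_card x
  have hL : lam ^ q * lam = -1 := by rw [← pow_succ]; exact hlam
  -- the "trace" x ↦ x + x^q hits every element fixed by x ↦ x^q
  have htr : ∀ c : F, c ^ q = c → ∃ y : F, y + y ^ q = c := by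
    intro c hc
    obtain ⟨z, hz⟩ : ∃ z : F, z + z ^ q ≠ 0 := by
      have h1q : (1 : WithBot ℕ) < q := by exact_mod_cast (by omega : 1 < q)
      have hmonic : (X ^ q + X : F[X]).Monic :=
        monic_X_pow_add (degree_X_le.trans_lt h1q)
      have hdeg : (X ^ q + X : F[X]).natDegree = q := by
        rw [natDegree_add_eq_left_of_natDegree_lt, natDegree_X_pow]
        rw [natDegree_X, natDegree_X_pow]; omega
      obtain ⟨z, hz⟩ := (X ^ q + X : F[X]).exists_eval_ne_zero_of_natDegree_lt_card
        hmonic.ne_zero (by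
          rw [hdeg, Cardinal.mk_fintype, hF]
          exact_mod_cast (by nlinarith : q < q ^ 2))
      refine ⟨z, ?_⟩
      simpa [add_comm] using hz
    set t := z + z ^ q with ht
    have htfix : t ^ q = t := by rw [ht, hadd, hqq]; ring
    refine ⟨c * z / t, ?_⟩
    rw [div_pow, mul_pow, hc, htfix]
    field_simp
    ring
  have hsub : ∀ x y : F, (x - y) ^ q = x ^ q - y ^ q := by
    intro x y
    rw [sub_eq_add_neg, hadd, hneg, ← sub_eq_add_neg]
  -- helper: matrices of the special shape preserve the lam-condition
  have key : ∀ C : Matrix (Fin 2) (Fin 2) F, C 1 0 = -(C 0 1) ^ q → C 1 1 = (C 0 0) ^ q →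
      ∀ v : Fin 2 → F, v 1 = lam * (v 0) ^ q →
      (C.mulVec v) 1 = lam * ((C.mulVec v) 0) ^ q := by
    intro C h10 h11 v hv
    have hm0 : (C.mulVec v) 0 = C 0 0 * v 0 + C 0 1 * v 1 := by
      simp [Matrix.mulVec, dotProduct, Fin.sum_univ_two]
    have hm1 : (C.mulVec v) 1 = C 1 0 * v 0 + C 1 1 * v 1 := by
      simp [Matrix.mulVec, dotProduct, Fin.sum_univ_two]
    rw [hm0, hm1, hv, h10, h11]
    have hexp : (C 0 0 * v 0 + C 0 1 * (lam * v 0 ^ q)) ^ q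
        = (C 0 0) ^ q * (v 0) ^ q + (C 0 1) ^ q * (lam ^ q * v 0) := by
      rw [hadd, mul_pow, mul_pow, mul_pow, hqq]
    rw [hexp]
    linear_combination (-(C 0 1) ^ q * v 0) * hL
  constructor
  · -- transitivity
    intro v w hv0 hw0 hv1 hw1
    have hq0 : q ≠ 0 := by omega
    have hu : v 0 ≠ 0 := by
      intro h
      exact hv0 (funext fun i => by fin_cases i <;> simp [h, hv1, zero_pow hq0])
    have hw : w 0 ≠ 0 := by
      intro h
      exact hw0 (funext fun i => by fin_cases i <;> simp [h, hw1, zero_pow hq0])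
    have hlam0 : lam ≠ 0 := by
      intro h
      rw [h, mul_zero] at hL
      exact one_ne_zero (by linear_combination hL : (1 : F) = 0)
    have hcfix : (w 0 ^ q * w 0 - v 0 ^ q * v 0) ^ q = w 0 ^ q * w 0 - v 0 ^ q * v 0 := by
      rw [hsub, mul_pow, mul_pow, hqq, hqq]
      ring
    obtain ⟨y, hy⟩ := htr _ hcfix
    have hden : w 0 ^ q * lam * v 0 ^ q ≠ 0 :=
      mul_ne_zero (mul_ne_zero (pow_ne_zero _ hw) hlam0) (pow_ne_zero _ hu)
    set b := y / (w 0 ^ q * lam * v 0 ^ q) with hb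
    have hyb : y = b * (w 0 ^ q * lam * v 0 ^ q) := by
      rw [hb, div_mul_cancel₀ _ hden]
    have hyq : y ^ q = b ^ q * (w 0 * lam ^ q * v 0) := by
      rw [hyb, mul_pow, mul_pow, mul_pow, hqq, hqq]
    have heq : w 0 ^ q * lam * v 0 ^ q * b + w 0 * lam ^ q * v 0 * b ^ q
        = w 0 ^ q * w 0 - v 0 ^ q * v 0 := by
      linear_combination hy - hyb - hyq
    set a := (w 0 - b * lam * v 0 ^ q) / v 0 with ha
    have hau : a * v 0 = w 0 - b * lam * v 0 ^ q := by
      rw [ha, div_mul_cancel₀ _ hu]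
    have haq : a ^ q * v 0 ^ q = w 0 ^ q - b ^ q * lam ^ q * v 0 := by
      have h1 : (a * v 0) ^ q = (w 0 - b * lam * v 0 ^ q) ^ q := by rw [hau]
      rw [mul_pow, hsub, mul_pow, mul_pow, hqq] at h1
      linear_combination h1
    have hK : a ^ q * a + b ^ q * b = 1 := by
      have hG : (a ^ q * a + b ^ q * b) * (v 0 ^ q * v 0) = 1 * (v 0 ^ q * v 0) := by
        have e : (a ^ q * a + b ^ q * b) * (v 0 ^ q * v 0)
            = (a * v 0) * (a ^ q * v 0 ^ q) + b ^ q * b * (v 0 ^ q * v 0) := by ring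
        rw [e, hau, haq]
        linear_combination -heq + (b * b ^ q * (v 0 ^ q * v 0)) * hL
      exact mul_right_cancel₀ (mul_ne_zero (pow_ne_zero q hu) hu) hG
    have hw0q : w 0 ^ q = a ^ q * v 0 ^ q + b ^ q * (lam ^ q * v 0) := by
      have h1 : w 0 = a * v 0 + b * (lam * v 0 ^ q) := by linear_combination -hau
      rw [h1, hadd, mul_pow, mul_pow, mul_pow, hqq]
    refine ⟨!![a, b; -(b ^ q), a ^ q], ?_, ?_, ?_⟩
    · rw [Matrix.det_fin_two_of]; linear_combination hK
    · have hmap : (!![a, b; -(b ^ q), a ^ q]).map (· ^ q) = !![a ^ q, b ^ q; -b, a] := by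
        ext i j
        fin_cases i <;> fin_cases j <;> simp [hneg, hqq]
      have htrans : (!![a ^ q, b ^ q; -b, a])ᵀ = !![a ^ q, -b; b ^ q, a] := by
        ext i j
        fin_cases i <;> fin_cases j <;> rfl
      rw [hmap, htrans]
      ext i j
      fin_cases i <;> fin_cases j <;>
          simp [Matrix.mul_apply, Fin.sum_univ_two, Matrix.one_apply] <;>
        first
          | linear_combination hK
          | ring
    · funext i
      fin_cases i
      · simp only [Matrix.mulVec, dotProduct, Fin.sum_univ_two]
        simp
        rw [hv1]
        linear_combination hau
      · simp only [Matrix.mulVec, dotProduct, Fin.sum_univ_two]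
        simp
        rw [hv1, hw1, hw0q]
        linear_combination (-(b ^ q) * v 0) * hL
  · -- stability
    intro C hdet hU
    have hadjC : (C.map (· ^ q))ᵀ = C.adjugate := by
      have h1 : C.adjugate * (C * (C.map (· ^ q))ᵀ) = C.adjugate := by rw [hU, mul_one]
      rw [← Matrix.mul_assoc, Matrix.adjugate_mul, hdet, one_smul, Matrix.one_mul] at h1
      exact h1
    have h10 : C 1 0 = -(C 0 1) ^ q := by
      have h2 := congrFun (congrFun hadjC 1) 0
      simp [Matrix.adjugate_fin_two, Matrix.transpose_apply, Matrix.map_apply] at h2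
      linear_combination h2
    have h11 : C 1 1 = (C 0 0) ^ q := by
      have h2 := congrFun (congrFun hadjC 0) 0
      simp [Matrix.adjugate_fin_two, Matrix.transpose_apply, Matrix.map_apply] at h2
      linear_combination -h2
    have hAC : C.adjugate * C = 1 := by
      rw [Matrix.adjugate_mul, hdet, one_smul]
    have hCA : C * C.adjugate = 1 := by
      rw [Matrix.mul_adjugate, hdet, one_smul]
    ext w
    constructor
    · rintro ⟨v, ⟨hv0, hv1⟩, rfl⟩
      refine ⟨?_, key C h10 h11 v hv1⟩
      intro h
      apply hv0
      have h2 := congrArg (C.adjugate.mulVec) h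
      rwa [Matrix.mulVec_mulVec, hAC, Matrix.one_mulVec, Matrix.mulVec_zero] at h2
    · rintro ⟨hw0, hw1⟩
      refine ⟨C.adjugate.mulVec w, ⟨?_, ?_⟩, ?_⟩
      · intro h
        apply hw0
        have h2 := congrArg (C.mulVec) h
        rwa [Matrix.mulVec_mulVec, hCA, Matrix.one_mulVec, Matrix.mulVec_zero] at h2
      · refine key C.adjugate ?_ ?_ w hw1
        · show C.adjugate 1 0 = -(C.adjugate 0 1) ^ q
          rw [Matrix.adjugate_fin_two]
          simp [hneg]
          linear_combination -h10
        · show C.adjugate 1 1 = (C.adjugate 0 0) ^ q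
          rw [Matrix.adjugate_fin_two]
          simp
          rw [h11, hqq]
      · rw [Matrix.mulVec_mulVec, hCA, Matrix.one_mulVec]
end

section
/- Let q be a prime power and let ω, δ ∈ GF(q²) with ω^{q+1} = −1 and δ·ω^q = δ^q·ω. Suppose that T(r·s^q·δ) + 2·s^{q+1}·δ^q·ω = 0 for all r, s ∈ GF(q²) satisfying r^{q+1} + s^{q+1} = 0, where T(x) = x + x^q. Then δ = 0. -/
/-- If `ω^{q+1} = -1`, `δω^q = δ^qω` and
`T(rs^qδ) + 2 s^{q+1} δ^q ω = 0` for all `r, s` with `r^{q+1} + s^{q+1} = 0`, then `δ = 0`. -/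
theorem statement_13 (q : ℕ) (hq : IsPrimePow q) (F : Type) [Field F] [Fintype F]
    (hF : Fintype.card F = q ^ 2)
    (ω δ : F) (hω : ω ^ (q + 1) = -1) (hδ : δ * ω ^ q = δ ^ q * ω)
    (h : ∀ r s : F, r ^ (q + 1) + s ^ (q + 1) = 0 →
      ((r * s ^ q * δ) + (r * s ^ q * δ) ^ q) + 2 * s ^ (q + 1) * δ ^ q * ω = 0) :
    δ = 0 := by
  classical
  have hq2 : 2 ≤ q := hq.two_le
  have hq0 : q ≠ 0 := by omega
  by_cases h2 : (2 : F) = 0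
  · -- characteristic 2
    have hneg : ∀ x : F, -x = x := by
      intro x
      linear_combination -x * h2
    -- first instance: r = s = 1 gives δ^q = δ
    have e1 := h 1 1 (by
      simp only [one_pow]
      linear_combination h2)
    simp only [one_pow, mul_one, one_mul] at e1
    have hδq : δ ^ q = δ := by
      have h' : δ ^ q = -δ := by linear_combination e1 - δ ^ q * ω * h2
      rw [h', hneg]
    -- find u with u^(q+1) = 1 and u^q ≠ u
    obtain ⟨g, hg⟩ := IsCyclic.exists_generator (α := Fˣ)
    have hcard : Fintype.card Fˣ = q ^ 2 - 1 := by
      rw [Fintype.card_units, hF]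
    have horder : orderOf g = q ^ 2 - 1 := by
      rw [orderOf_eq_card_of_forall_mem_zpowers hg, Nat.card_eq_fintype_card, hcard]
    set u : F := ((g ^ (q - 1) : Fˣ) : F) with hu
    have hfact : (q - 1) * (q + 1) = q ^ 2 - 1 := by
      obtain ⟨m, rfl⟩ : ∃ m, q = m + 2 := ⟨q - 2, by omega⟩
      have h1 : m + 2 - 1 = m + 1 := by omega
      rw [h1]
      exact (Nat.sub_eq_of_eq_add (by ring)).symm
    have hgone : g ^ (q ^ 2 - 1) = 1 := by
      rw [← hcard]; exact pow_card_eq_one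
    have hu1 : u ^ (q + 1) = 1 := by
      rw [hu, ← Units.val_pow_eq_pow_val, ← pow_mul, hfact, hgone, Units.val_one]
    have huq : u ^ q ≠ u := by
      intro hcon
      have hgeq : g ^ ((q - 1) * q) = g ^ (q - 1) := by
        apply Units.ext
        rw [Units.val_pow_eq_pow_val, pow_mul, ← Units.val_pow_eq_pow_val, ← hu]
        exact hcon
      have hmod := (pow_eq_pow_iff_modEq).mp hgeq
      rw [horder] at hmod
      obtain ⟨m, rfl⟩ : ∃ m, q = m + 2 := ⟨q - 2, by omega⟩
      have h1 : m + 2 - 1 = m + 1 := by omega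
      rw [h1] at hmod
      have hsub : (m + 2) ^ 2 - 1 = (m + 1) * (m + 2) + (m + 1) :=
        Nat.sub_eq_of_eq_add (by ring)
      have hb1 : (m + 1) * (m + 2) < (m + 2) ^ 2 - 1 := by
        rw [hsub]; omega
      have hb2 : m + 1 < (m + 2) ^ 2 - 1 := by
        rw [hsub]
        have : 0 < (m + 1) * (m + 2) := by positivity
        omega
      have heq : (m + 1) * (m + 2) = m + 1 := by
        have e1' := Nat.mod_eq_of_lt hb1
        have e2' := Nat.mod_eq_of_lt hb2
        unfold Nat.ModEq at hmod
        omega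
      nlinarith [heq]
    -- second instance: r = u, s = 1
    have e2 := h u 1 (by
      rw [one_pow, hu1]
      linear_combination h2)
    simp only [one_pow, mul_one] at e2
    rw [mul_pow, hδq] at e2
    -- e2 : u * δ + u ^ q * δ + 2 * δ ^ q * ω = 0
    have e3 : (u + u ^ q) * δ = 0 := by
      linear_combination e2 - δ * ω * h2
    by_contra hδ0
    apply huq
    rcases mul_eq_zero.mp e3 with h' | h'
    · have h'' : u ^ q = -u := by linear_combination h'
      rw [h'', hneg]
    · exact absurd h' hδ0
  · -- odd characteristic
    have hqodd : Odd q := by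
      rcases Nat.even_or_odd q with he | ho
      · exfalso
        obtain ⟨n, hn⟩ := FiniteField.card F (ringChar F)
        have h2d : 2 ∣ ringChar F ^ (n : ℕ) := by
          rw [← hn.2, hF]
          exact dvd_pow he.two_dvd (by norm_num)
        have hpr2 : ringChar F = 2 :=
          ((Nat.prime_dvd_prime_iff_eq Nat.prime_two hn.1).mp
            (Nat.Prime.dvd_of_dvd_pow Nat.prime_two h2d)).symm
        apply h2
        have hc := CharP.cast_eq_zero F (ringChar F)
        rw [hpr2] at hc
        exact_mod_cast hc
      · exact ho
    have hqe : Even (q + 1) := Odd.add_one hqodd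
    have e1 := h ω 1 (by rw [one_pow, hω]; ring)
    have e2 := h (-ω) 1 (by rw [one_pow, hqe.neg_pow, hω]; ring)
    simp only [one_pow, mul_one] at e1 e2
    have hnegq : (-(ω * δ)) ^ q = -(ω * δ) ^ q := hqodd.neg_pow _
    have e3 : (2 + 2) * (δ ^ q * ω) = 0 := by
      have hrw : -ω * δ = -(ω * δ) := by ring
      rw [hrw, hnegq] at e2
      linear_combination e1 + e2
    have h4 : (2 + 2 : F) ≠ 0 := by
      intro hcon
      have : (2 : F) * 2 = 0 := by linear_combination hcon
      rcases mul_eq_zero.mp this with h' | h' <;> exact h2 h'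
    have hω0 : ω ≠ 0 := by
      intro hcon
      rw [hcon, zero_pow (by omega : q + 1 ≠ 0)] at hω
      exact one_ne_zero (by linear_combination hω : (1 : F) = 0)
    have : δ ^ q * ω = 0 := by
      rcases mul_eq_zero.mp e3 with h' | h'
      · exact absurd h' h4
      · exact h'
    rcases mul_eq_zero.mp this with h' | h'
    · exact (pow_eq_zero_iff hq0).mp h'
    · exact absurd h' hω0
end
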